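/- arXiv:math/0207134 — 4 statements merged into one kernel-verified Lean document; each statement's English description precedes it below -/
import Mathlib

section
/- For every T̂ ∈ D₀ with lift T̃, the vertical rotation set ρ_V(T)* is a nonempty compact interval of ℝ containing 0; that is, ρ_V(T)* = [ρ_V^min, ρ_V^max] with ρ_V^min ≤ 0 ≤ ρ_V^max. -/
open Filter Topology

noncomputable section

/-- The cylinder (ℝ/ℤ) × ℝ. -/
abbrev Cyl : Type := AddCircle (1:ℝ) × ℝ

/-- Projection π₁ : ℝ² → (ℝ/ℤ)×ℝ, (x,y) ↦ (x mod 1, y). -/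
def projCyl (Z : ℝ × ℝ) : Cyl := ((Z.1 : AddCircle (1:ℝ)), Z.2)

/-- The lift T̃(x,y) = (x + y + g(x), y + g(x)). -/
def liftMap (g : ℝ → ℝ) (Z : ℝ × ℝ) : ℝ × ℝ := (Z.1 + Z.2 + g Z.1, Z.2 + g Z.1)

/-- The vertical rotation set: all limits of convergent sequences
    (p₂(T̃^{nᵢ}(Zᵢ)) − p₂(Zᵢ))/nᵢ with nᵢ → ∞. -/
def vRotSet (T : ℝ × ℝ → ℝ × ℝ) : Set ℝ :=
  {ω | ∃ (Z : ℕ → ℝ × ℝ) (n : ℕ → ℕ), Tendsto n atTop atTop ∧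
    Tendsto (fun i => ((T^[n i] (Z i)).2 - (Z i).2) / (n i : ℝ)) atTop (𝓝 ω)}

/-- ρ_V^max -/
def rhoVMax (T : ℝ × ℝ → ℝ × ℝ) : ℝ := sSup (vRotSet T)

/-- ρ_V^min -/
def rhoVMin (T : ℝ × ℝ → ℝ × ℝ) : ℝ := sInf (vRotSet T)

/-- A representative in [0,1) of a point of ℝ/ℤ. -/
def rep (x : AddCircle (1:ℝ)) : ℝ := (AddCircle.equivIco 1 0 x : ℝ)

/-- The cylinder map induced by the lift (x,y) ↦ (x+y+g(x), y+g(x)) for 1-periodic g. -/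
def inducedMap (g : ℝ → ℝ) (z : Cyl) : Cyl :=
  (z.1 + ((z.2 + g (rep z.1) : ℝ) : AddCircle (1:ℝ)), z.2 + g (rep z.1))

/-- A rotational invariant curve of a cylinder homeomorphism `S`: the image Γ of a
continuous injective map γ : ℝ/ℤ → (ℝ/ℤ)×ℝ such that p₁∘γ has degree one
(expressed via a continuous lift γt with γt(t+1) = γt(t)+(1,0)) and S(Γ) = Γ. -/
def IsRIC (S : Cyl → Cyl) (Γ : Set Cyl) : Prop :=
  ∃ γ : AddCircle (1:ℝ) → Cyl,
    Continuous γ ∧ Function.Injective γ ∧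
    (∃ γt : ℝ → ℝ × ℝ, Continuous γt ∧ (∀ t, γt (t + 1) = γt t + (1, 0)) ∧
      ∀ t : ℝ, γ (t : AddCircle (1:ℝ)) = projCyl (γt t)) ∧
    Γ = Set.range γ ∧ S '' Γ = Γ

/-- K(s,q) = π₁(K̃(s,q)) where K̃(s,q) = {(x,y) : p₁(T̃^q(x,y)) = x + s}. -/
def Kset (g : ℝ → ℝ) (s : ℤ) (q : ℕ) : Set Cyl :=
  projCyl '' {Z : ℝ × ℝ | ((liftMap g)^[q] Z).1 = Z.1 + s}

def muMinus (g : ℝ → ℝ) (s : ℤ) (q : ℕ) (x : AddCircle (1:ℝ)) : ℝ :=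
  sInf {y : ℝ | (x, y) ∈ Kset g s q}

def muPlus (g : ℝ → ℝ) (s : ℤ) (q : ℕ) (x : AddCircle (1:ℝ)) : ℝ :=
  sSup {y : ℝ | (x, y) ∈ Kset g s q}

def nuMinus (g : ℝ → ℝ) (s : ℤ) (q : ℕ) (x : AddCircle (1:ℝ)) : ℝ :=
  sInf {y : ℝ | (x, y) ∈ (inducedMap g)^[q] '' Kset g s q}

def nuPlus (g : ℝ → ℝ) (s : ℤ) (q : ℕ) (x : AddCircle (1:ℝ)) : ℝ :=
  sSup {y : ℝ | (x, y) ∈ (inducedMap g)^[q] '' Kset g s q}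

/-- C separates the cylinder: the far upper and lower halves lie in two different
connected components of the complement. -/
def SeparatesCyl (C : Set Cyl) : Prop :=
  ∃ M : ℝ, 0 < M ∧ ∃ A ∈ Cᶜ, ∃ B ∈ Cᶜ,
    {z : Cyl | M ≤ z.2} ⊆ connectedComponentIn Cᶜ A ∧
    {z : Cyl | z.2 ≤ -M} ⊆ connectedComponentIn Cᶜ B ∧
    connectedComponentIn Cᶜ A ≠ connectedComponentIn Cᶜ B

/-- The torus T² = (ℝ/ℤ)². -/
abbrev Torus : Type := AddCircle (1:ℝ) × AddCircle (1:ℝ)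

def projTorus (Z : ℝ × ℝ) : Torus := ((Z.1 : AddCircle (1:ℝ)), (Z.2 : AddCircle (1:ℝ)))

/-- The torus map induced by the lift for 1-periodic g. -/
def torusMapOf (g : ℝ → ℝ) (z : Torus) : Torus :=
  (z.1 + z.2 + ((g (rep z.1) : ℝ) : AddCircle (1:ℝ)), z.2 + ((g (rep z.1) : ℝ) : AddCircle (1:ℝ)))


section AuxSection
open MeasureTheory Set
namespace Aux
variable {g : ℝ → ℝ}

def gh (g : ℝ → ℝ) : AddCircle (1:ℝ) → ℝ := fun x => g (rep x)

lemma gh_eq_liftIco : gh g = AddCircle.liftIco 1 0 g := rfl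

lemma gh_coe (hper : ∀ x, g (x + 1) = g x) (x : ℝ) : gh g (x : AddCircle (1:ℝ)) = g x := by
  have hp : Function.Periodic g 1 := hper
  have : rep (x : AddCircle (1:ℝ)) = Int.fract x := by
    have := AddCircle.coe_equivIco_mk_apply (p := (1:ℝ)) x
    simpa [rep] using this
  rw [gh, this, Int.fract]
  simpa using hp.sub_int_mul_eq (x := x) ⌊x⌋

lemma gh_cont (hg : Continuous g) (hper : ∀ x, g (x + 1) = g x) : Continuous (gh g) := by
  rw [gh_eq_liftIco]
  exact AddCircle.liftIco_zero_continuous (by simpa using (hper 0).symm) hg.continuousOn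

end Aux

namespace Aux2
open Aux
variable {g : ℝ → ℝ} (hper : ∀ x, g (x + 1) = g x)

lemma semiconj (hper : ∀ x, g (x + 1) = g x) (Z : ℝ × ℝ) :
    projTorus (liftMap g Z) = torusMapOf g (projTorus Z) := by
  have h : g (rep ((Z.1 : ℝ) : AddCircle (1:ℝ))) = g Z.1 := gh_coe hper Z.1
  simp only [projTorus, liftMap, torusMapOf, h]
  constructor

lemma semiconj_iter (hper : ∀ x, g (x + 1) = g x) (n : ℕ) (Z : ℝ × ℝ) :
    projTorus ((liftMap g)^[n] Z) = (torusMapOf g)^[n] (projTorus Z) := by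
  induction n with
  | zero => rfl
  | succ n ih =>
      rw [Function.iterate_succ_apply', Function.iterate_succ_apply', ← ih, semiconj hper]

lemma disp (n : ℕ) (Z : ℝ × ℝ) :
    ((liftMap g)^[n] Z).2 - Z.2 = ∑ k ∈ Finset.range n, g (((liftMap g)^[k] Z).1) := by
  induction n with
  | zero => simp
  | succ n ih =>
      rw [Function.iterate_succ_apply', Finset.sum_range_succ, ← ih, liftMap]
      ring

def phi (g : ℝ → ℝ) (n : ℕ) (z : Torus) : ℝ :=
  ∑ k ∈ Finset.range n, gh g (((torusMapOf g)^[k] z).1)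

lemma phi_proj (hper : ∀ x, g (x + 1) = g x) (n : ℕ) (Z : ℝ × ℝ) :
    phi g n (projTorus Z) = ((liftMap g)^[n] Z).2 - Z.2 := by
  rw [disp, phi]
  refine Finset.sum_congr rfl fun k _ => ?_
  rw [← semiconj_iter hper, projTorus]
  exact gh_coe hper _

lemma cont_S (hg : Continuous g) (hper : ∀ x, g (x + 1) = g x) : Continuous (torusMapOf g) := by
  have hc : Continuous fun z : Torus => ((gh g z.1 : ℝ) : AddCircle (1:ℝ)) :=
    (AddCircle.continuous_mk' 1).comp ((gh_cont hg hper).comp continuous_fst)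
  exact ((continuous_fst.add continuous_snd).add hc).prodMk (continuous_snd.add hc)

lemma cont_phi (hg : Continuous g) (hper : ∀ x, g (x + 1) = g x) (n : ℕ) :
    Continuous (phi g n) := by
  refine continuous_finset_sum _ fun k _ => ?_
  exact (gh_cont hg hper).comp (continuous_fst.comp ((cont_S hg hper).iterate k))

lemma phi_add (m n : ℕ) (z : Torus) :
    phi g (m + n) z = phi g m z + phi g n ((torusMapOf g)^[m] z) := by
  rw [phi, Finset.sum_range_add, phi, phi]
  congr 1
  refine Finset.sum_congr rfl fun k _ => ?_
  rw [add_comm m k, Function.iterate_add_apply]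

end Aux2

namespace Aux3
open Aux Aux2
variable {g : ℝ → ℝ}

lemma mp_A (hg : Continuous g) (hper : ∀ x, g (x + 1) = g x) :
    MeasurePreserving (fun z : Torus => (z.1, z.2 + ((gh g z.1 : ℝ) : AddCircle (1:ℝ))))
      volume volume := by
  rw [Measure.volume_eq_prod]
  refine (MeasurePreserving.id volume).skew_product
    (g := fun x y => y + ((gh g x : ℝ) : AddCircle (1:ℝ))) ?_ (ae_of_all _ fun x => ?_)
  · exact measurable_snd.add
      ((AddCircle.measurable_mk'.comp ((gh_cont hg hper).measurable.comp measurable_fst)))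
  · exact map_add_right_eq_self volume _

lemma mp_B : MeasurePreserving (fun z : Torus => (z.1 + z.2, z.2)) volume volume := by
  have h1 : MeasurePreserving (Prod.swap : Torus → Torus) volume volume := by
    rw [Measure.volume_eq_prod]; exact Measure.measurePreserving_swap
  have h2 : MeasurePreserving (fun w : Torus => (w.1, w.2 + w.1)) volume volume := by
    rw [Measure.volume_eq_prod]
    exact (MeasurePreserving.id volume).skew_product
      (g := fun x y => y + x) (measurable_snd.add measurable_fst)
      (ae_of_all _ fun x => map_add_right_eq_self volume _)
  have h := (h1.comp h2).comp h1
  convert h using 1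
  funext z; rfl

lemma mp_S (hg : Continuous g) (hper : ∀ x, g (x + 1) = g x) :
    MeasurePreserving (torusMapOf g) volume volume := by
  have := mp_B.comp (mp_A hg hper)
  convert this using 1
  funext z
  show _ = ((fun z : Torus => (z.1 + z.2, z.2)) ∘ _) z
  simp only [Function.comp_apply, torusMapOf, gh]
  exact Prod.ext (add_assoc _ _ _) rfl

end Aux3

namespace Aux4
open Aux Aux2 Aux3
variable {g : ℝ → ℝ}

lemma integrable_torus {f : Torus → ℝ} (hf : Continuous f) : Integrable f volume := by
  have := hf.continuousOn.integrableOn_compact (μ := (volume : Measure Torus))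
    (isCompact_univ : IsCompact (univ : Set Torus))
  rwa [integrableOn_univ] at this

lemma prob_circle : IsProbabilityMeasure (volume : Measure (AddCircle (1:ℝ))) := by
  constructor; simp [AddCircle.measure_univ]

lemma integral_gh_circle (hper : ∀ x, g (x + 1) = g x)
    (hint : ∫ x in (0:ℝ)..1, g x = 0) : ∫ x : AddCircle (1:ℝ), gh g x = 0 := by
  have h := AddCircle.integral_preimage (T := (1:ℝ)) 0 (gh g)
  rw [← h]
  have : ∀ a : ℝ, gh g ((a : ℝ) : AddCircle (1:ℝ)) = g a := gh_coe hper
  simp only [this]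
  rw [← intervalIntegral.integral_of_le (by norm_num : (0:ℝ) ≤ 0 + 1)] at *
  simpa using hint

lemma integral_gh_fst (hg : Continuous g) (hper : ∀ x, g (x + 1) = g x)
    (hint : ∫ x in (0:ℝ)..1, g x = 0) : ∫ z : Torus, gh g z.1 = 0 := by
  haveI := prob_circle
  have hi : Integrable (fun z : Torus => gh g z.1) volume :=
    integrable_torus ((gh_cont hg hper).comp continuous_fst)
  rw [Measure.volume_eq_prod] at hi ⊢
  rw [MeasureTheory.integral_prod _ hi]
  simp only [MeasureTheory.integral_const, measure_univ, probReal_univ, ENNReal.toReal_one, one_smul]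
  exact integral_gh_circle hper hint

lemma integral_phi (hg : Continuous g) (hper : ∀ x, g (x + 1) = g x)
    (hint : ∫ x in (0:ℝ)..1, g x = 0) (n : ℕ) : ∫ z : Torus, phi g n z = 0 := by
  have hterm : ∀ k : ℕ, ∫ z : Torus, gh g (((torusMapOf g)^[k] z).1) = 0 := by
    intro k
    have hmp : MeasurePreserving ((torusMapOf g)^[k]) (volume : Measure Torus) volume :=
      (mp_S hg hper).iterate k
    have hF : Continuous fun z : Torus => gh g z.1 := (gh_cont hg hper).comp continuous_fst
    have := MeasureTheory.integral_map (μ := (volume : Measure Torus))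
      hmp.measurable.aemeasurable (f := fun w : Torus => gh g w.1)
      (hF.aestronglyMeasurable)
    rw [hmp.map_eq] at this
    rw [← this]
    exact integral_gh_fst hg hper hint
  unfold phi
  rw [MeasureTheory.integral_finset_sum]
  · simp [hterm]
  · intro k _
    exact integrable_torus ((gh_cont hg hper).comp
      (continuous_fst.comp ((cont_S hg hper).iterate k)))

end Aux4

namespace Aux5
open Aux Aux2 Aux3 Aux4

def Mseq (g : ℝ → ℝ) (n : ℕ) : ℝ := sSup (Set.range (phi g n))
def mseq (g : ℝ → ℝ) (n : ℕ) : ℝ := sInf (Set.range (phi g n))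

variable {g : ℝ → ℝ}
variable (hg : Continuous g) (hper : ∀ x, g (x + 1) = g x)
include hg hper

lemma range_compact (n : ℕ) : IsCompact (Set.range (phi g n)) :=
  isCompact_range (cont_phi hg hper n)

lemma phi_le_Mseq (n : ℕ) (z : Torus) : phi g n z ≤ Mseq g n :=
  le_csSup (range_compact hg hper n).bddAbove ⟨z, rfl⟩

lemma mseq_le_phi (n : ℕ) (z : Torus) : mseq g n ≤ phi g n z :=
  csInf_le (range_compact hg hper n).bddBelow ⟨z, rfl⟩

lemma Mseq_mem (n : ℕ) : ∃ z, phi g n z = Mseq g n := by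
  have := (range_compact hg hper n).sSup_mem (Set.range_nonempty _)
  exact this

lemma mseq_mem (n : ℕ) : ∃ z, phi g n z = mseq g n := by
  have := (range_compact hg hper n).sInf_mem (Set.range_nonempty _)
  exact this

lemma Msub : Subadditive (Mseq g) := by
  intro a b
  obtain ⟨z, hz⟩ := Mseq_mem hg hper (a + b)
  rw [← hz, phi_add]
  exact add_le_add (phi_le_Mseq hg hper a z) (phi_le_Mseq hg hper b _)

lemma msub : Subadditive (fun n => -(mseq g n)) := by
  intro a b
  obtain ⟨z, hz⟩ := mseq_mem hg hper (a + b)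
  have : mseq g a + mseq g b ≤ mseq g (a + b) := by
    rw [← hz, phi_add]
    exact add_le_add (mseq_le_phi hg hper a z) (mseq_le_phi hg hper b _)
  simp only [neg_add]
  linarith

lemma exists_bound : ∃ C : ℝ, 0 ≤ C ∧ ∀ (n : ℕ) (z : Torus), |phi g n z| ≤ n * C := by
  obtain ⟨x₀, -, hx₀⟩ := (isCompact_univ : IsCompact (Set.univ : Set (AddCircle (1:ℝ)))).exists_isMaxOn
    Set.univ_nonempty ((gh_cont hg hper).abs.continuousOn)
  refine ⟨|gh g x₀|, abs_nonneg _, fun n z => ?_⟩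
  calc |phi g n z| ≤ ∑ k ∈ Finset.range n, |gh g (((torusMapOf g)^[k] z).1)| :=
        Finset.abs_sum_le_sum_abs _ _
    _ ≤ ∑ _k ∈ Finset.range n, |gh g x₀| := by
        exact Finset.sum_le_sum fun k _ => hx₀ (Set.mem_univ _)
    _ = n * |gh g x₀| := by simp [mul_comm]

lemma Mseq_nonneg (hint : ∫ x in (0:ℝ)..1, g x = 0) (n : ℕ) : 0 ≤ Mseq g n := by
  haveI : IsProbabilityMeasure (volume : Measure (AddCircle (1:ℝ))) := prob_circle
  haveI : IsProbabilityMeasure (volume : Measure Torus) := by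
    rw [Measure.volume_eq_prod]; infer_instance
  have h1 : ∫ z : Torus, phi g n z ≤ ∫ _z : Torus, Mseq g n :=
    integral_mono (integrable_torus (cont_phi hg hper n)) (integrable_const _)
      (fun z => phi_le_Mseq hg hper n z)
  rw [integral_phi hg hper hint n] at h1
  simpa using h1

lemma mseq_nonpos (hint : ∫ x in (0:ℝ)..1, g x = 0) (n : ℕ) : mseq g n ≤ 0 := by
  haveI : IsProbabilityMeasure (volume : Measure (AddCircle (1:ℝ))) := prob_circle
  haveI : IsProbabilityMeasure (volume : Measure Torus) := by
    rw [Measure.volume_eq_prod]; infer_instance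
  have h1 : ∫ _z : Torus, mseq g n ≤ ∫ z : Torus, phi g n z :=
    integral_mono (integrable_const _) (integrable_torus (cont_phi hg hper n))
      (fun z => mseq_le_phi hg hper n z)
  rw [integral_phi hg hper hint n] at h1
  simpa using h1

end Aux5

end AuxSection

open Aux Aux2 Aux3 Aux4 Aux5 in
/-- For T̂ ∈ D₀ the vertical rotation set is a nonempty compact interval
containing 0: ρ_V(T)* = [ρ_V^min, ρ_V^max] with ρ_V^min ≤ 0 ≤ ρ_V^max. -/
theorem stmt2 (g : ℝ → ℝ) (hLip : ∃ K, LipschitzWith K g)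
    (hper : ∀ x, g (x + 1) = g x) (hint : ∫ x in (0:ℝ)..1, g x = 0) :
    (vRotSet (liftMap g)).Nonempty ∧ IsCompact (vRotSet (liftMap g)) ∧
    vRotSet (liftMap g) = Set.Icc (rhoVMin (liftMap g)) (rhoVMax (liftMap g)) ∧
    rhoVMin (liftMap g) ≤ 0 ∧ 0 ≤ rhoVMax (liftMap g) := by
  classical
  obtain ⟨K, hK⟩ := hLip
  have hg : Continuous g := hK.continuous
  obtain ⟨C, hC0, hC⟩ := exists_bound hg hper
  have z₀ : Torus := ⟨0, 0⟩
  have hMlow : ∀ n : ℕ, -((n : ℝ) * C) ≤ Mseq g n := fun n =>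
    le_trans (neg_le_of_abs_le (hC n z₀)) (phi_le_Mseq hg hper n z₀)
  have hmup : ∀ n : ℕ, mseq g n ≤ (n : ℝ) * C := fun n =>
    le_trans (mseq_le_phi hg hper n z₀) (le_of_abs_le (hC n z₀))
  have hMb : BddBelow (Set.range fun n : ℕ => Mseq g n / n) := by
    refine ⟨-C, ?_⟩
    rintro x ⟨n, rfl⟩
    rcases eq_or_ne n 0 with h | h
    · simp only [h, Nat.cast_zero, div_zero]; linarith
    · have hn : (0:ℝ) < n := Nat.cast_pos.mpr (Nat.pos_of_ne_zero h)
      rw [le_div_iff₀ hn]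
      have := hMlow n
      nlinarith [hMlow n]
  have hmb : BddBelow (Set.range fun n : ℕ => -(mseq g n) / n) := by
    refine ⟨-C, ?_⟩
    rintro x ⟨n, rfl⟩
    rcases eq_or_ne n 0 with h | h
    · simp only [h, Nat.cast_zero, div_zero]; linarith
    · have hn : (0:ℝ) < n := Nat.cast_pos.mpr (Nat.pos_of_ne_zero h)
      rw [le_div_iff₀ hn]
      nlinarith [hmup n]
  have hMsub := Msub hg hper
  have hmsub := msub hg hper
  set Lp := hMsub.lim with hLpdef
  set Lm := -hmsub.lim with hLmdef
  have hMtend : Tendsto (fun n : ℕ => Mseq g n / n) atTop (𝓝 Lp) := hMsub.tendsto_lim hMb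
  have hmtend : Tendsto (fun n : ℕ => mseq g n / n) atTop (𝓝 Lm) := by
    have h := (hmsub.tendsto_lim hmb).neg
    simp only [neg_div, neg_neg] at h
    exact h
  have hMge : ∀ n : ℕ, n ≠ 0 → Lp ≤ Mseq g n / n := fun n hn => hMsub.lim_le_div hMb hn
  have hmle : ∀ n : ℕ, n ≠ 0 → mseq g n / n ≤ Lm := by
    intro n hn
    have h := hmsub.lim_le_div hmb hn
    simp only [neg_div] at h
    rw [hLmdef]
    linarith
  have hLp0 : 0 ≤ Lp :=
    ge_of_tendsto' hMtend fun n => div_nonneg (Mseq_nonneg hg hper hint n) (Nat.cast_nonneg n)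
  have hLm0 : Lm ≤ 0 :=
    le_of_tendsto' hmtend fun n =>
      div_nonpos_of_nonpos_of_nonneg (mseq_nonpos hg hper hint n) (Nat.cast_nonneg n)
  have hLmLp : Lm ≤ Lp := hLm0.trans hLp0
  have attain : ∀ ω ∈ Set.Icc Lm Lp, ∀ n : ℕ, n ≠ 0 → ∃ Z : ℝ × ℝ,
      ((liftMap g)^[n] Z).2 - Z.2 = n * ω := by
    rintro ω ⟨hω1, hω2⟩ n hn
    have hn' : (0:ℝ) < n := Nat.cast_pos.mpr (Nat.pos_of_ne_zero hn)
    obtain ⟨a, ha⟩ := mseq_mem hg hper n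
    obtain ⟨b, hb⟩ := Mseq_mem hg hper n
    have h1 : mseq g n ≤ (n : ℝ) * ω := by
      have h := (hmle n hn).trans hω1
      rw [div_le_iff₀ hn'] at h
      linarith
    have h2 : (n : ℝ) * ω ≤ Mseq g n := by
      have h := hω2.trans (hMge n hn)
      rw [le_div_iff₀ hn'] at h
      linarith
    have hIcc : (n : ℝ) * ω ∈ Set.Icc (phi g n a) (phi g n b) := by
      rw [ha, hb]; exact ⟨h1, h2⟩
    obtain ⟨z, hz⟩ := intermediate_value_univ a b (cont_phi hg hper n) hIcc
    refine ⟨(rep z.1, rep z.2), ?_⟩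
    have hproj : projTorus (rep z.1, rep z.2) = z := by
      apply Prod.ext
      · exact (AddCircle.equivIco 1 0).symm_apply_apply z.1
      · exact (AddCircle.equivIco 1 0).symm_apply_apply z.2
    rw [← phi_proj hper n, hproj, hz]
  have hsub : vRotSet (liftMap g) ⊆ Set.Icc Lm Lp := by
    rintro ω ⟨Z, nseq, hns, hlim⟩
    constructor
    · refine le_of_tendsto_of_tendsto (hmtend.comp hns) hlim ?_
      filter_upwards [hns.eventually_ge_atTop 1] with i hi
      have hni : (0:ℝ) < nseq i := by exact_mod_cast hi
      have hd : mseq g (nseq i) ≤ ((liftMap g)^[nseq i] (Z i)).2 - (Z i).2 := by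
        rw [← phi_proj hper]; exact mseq_le_phi hg hper _ _
      exact div_le_div_of_nonneg_right hd hni.le
    · refine le_of_tendsto_of_tendsto hlim (hMtend.comp hns) ?_
      filter_upwards [hns.eventually_ge_atTop 1] with i hi
      have hni : (0:ℝ) < nseq i := by exact_mod_cast hi
      have hd : ((liftMap g)^[nseq i] (Z i)).2 - (Z i).2 ≤ Mseq g (nseq i) := by
        rw [← phi_proj hper]; exact phi_le_Mseq hg hper _ _
      exact div_le_div_of_nonneg_right hd hni.le
  have hsup : Set.Icc Lm Lp ⊆ vRotSet (liftMap g) := by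
    intro ω hω
    have hex : ∀ n : ℕ, ∃ Z : ℝ × ℝ, n = 0 ∨ ((liftMap g)^[n] Z).2 - Z.2 = n * ω := by
      intro n
      rcases eq_or_ne n 0 with h | h
      · exact ⟨(0, 0), Or.inl h⟩
      · obtain ⟨Z, hZ⟩ := attain ω hω n h
        exact ⟨Z, Or.inr hZ⟩
    choose Z hZ using hex
    refine ⟨Z, id, tendsto_id, ?_⟩
    have hev : ∀ᶠ i : ℕ in atTop,
        (fun _ : ℕ => ω) i = (((liftMap g)^[i] (Z i)).2 - (Z i).2) / i := by
      filter_upwards [eventually_ne_atTop 0] with i hi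
      rcases hZ i with h | h
      · exact absurd h hi
      · rw [h, mul_div_cancel_left₀]
        exact_mod_cast hi
    exact Tendsto.congr' hev tendsto_const_nhds
  have hEq : vRotSet (liftMap g) = Set.Icc Lm Lp := Set.Subset.antisymm hsub hsup
  have hmin : rhoVMin (liftMap g) = Lm := by rw [rhoVMin, hEq, csInf_Icc hLmLp]
  have hmax : rhoVMax (liftMap g) = Lp := by rw [rhoVMax, hEq, csSup_Icc hLmLp]
  refine ⟨?_, ?_, ?_, ?_, ?_⟩
  · rw [hEq]; exact Set.nonempty_Icc.mpr hLmLp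
  · rw [hEq]; exact isCompact_Icc
  · rw [hEq, hmin, hmax]
  · rw [hmin]; exact hLm0
  · rw [hmax]; exact hLp0


end
end

section
/- Let T̂ ∈ D₀ with lift T̃, let s∈ℤ and let q≥1 be an integer. Then for every x∈ℝ/ℤ one has T̂^q(x, μ⁻(x)) = (x, ν⁺(x)) and T̂^q(x, μ⁺(x)) = (x, ν⁻(x)). -/
open Filter Topology

noncomputable section

set_option maxHeartbeats 1000000

namespace Stmt10aux

/-- first coordinate of j-th iterate on the fiber over b -/
def XX (g : ℝ → ℝ) (b : ℝ) (j : ℕ) (y : ℝ) : ℝ := ((liftMap g)^[j] (b, y)).1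
def YY (g : ℝ → ℝ) (b : ℝ) (j : ℕ) (y : ℝ) : ℝ := ((liftMap g)^[j] (b, y)).2

variable {g : ℝ → ℝ} {b : ℝ}

lemma XX_zero (y : ℝ) : XX g b 0 y = b := rfl
lemma YY_zero (y : ℝ) : YY g b 0 y = y := rfl

lemma XX_succ (j : ℕ) (y : ℝ) :
    XX g b (j+1) y = XX g b j y + YY g b j y + g (XX g b j y) := by
  simp only [XX, YY, Function.iterate_succ_apply', liftMap]

lemma YY_succ (j : ℕ) (y : ℝ) :
    YY g b (j+1) y = YY g b j y + g (XX g b j y) := by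
  simp only [XX, YY, Function.iterate_succ_apply', liftMap]

lemma YY_eq_sub (j : ℕ) (y : ℝ) :
    YY g b (j+1) y = XX g b (j+1) y - XX g b j y := by
  rw [XX_succ, YY_succ]; ring

lemma rec2 (j : ℕ) (y : ℝ) :
    XX g b (j+2) y = 2 * XX g b (j+1) y + g (XX g b (j+1) y) - XX g b j y := by
  have h1 := XX_succ (g := g) (b := b) (j+1) y
  have h2 := YY_eq_sub (g := g) (b := b) j y
  rw [h1, h2]; ring

lemma XX_one (y : ℝ) : XX g b 1 y = b + y + g b := by
  rw [XX_succ 0 y, XX_zero, YY_zero]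

lemma cont_XY (hg : Continuous g) (j : ℕ) :
    Continuous (XX g b j) ∧ Continuous (YY g b j) := by
  induction j with
  | zero => exact ⟨continuous_const, continuous_id⟩
  | succ j ih =>
    obtain ⟨hX, hY⟩ := ih
    constructor
    · have : XX g b (j+1) = fun y => XX g b j y + YY g b j y + g (XX g b j y) :=
        funext fun y => XX_succ j y
      rw [this]
      exact (hX.add hY).add (hg.comp hX)
    · have : YY g b (j+1) = fun y => YY g b j y + g (XX g b j y) :=
        funext fun y => YY_succ j y
      rw [this]
      exact hY.add (hg.comp hX)

lemma bndXY {G : ℝ} (hG : ∀ x, |g x| ≤ G) (j : ℕ) (y : ℝ) :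
    |YY g b j y - y| ≤ j * G ∧ |XX g b j y - (b + j * y)| ≤ (j * j) * G := by
  have hG0 : 0 ≤ G := le_trans (abs_nonneg _) (hG 0)
  induction j with
  | zero => simp [XX_zero, YY_zero]
  | succ j ih =>
    obtain ⟨hY, hX⟩ := ih
    have hg1 := hG (XX g b j y)
    constructor
    · rw [YY_succ]
      push_cast
      have : YY g b j y + g (XX g b j y) - y = (YY g b j y - y) + g (XX g b j y) := by ring
      rw [this]
      calc |(YY g b j y - y) + g (XX g b j y)| ≤ |YY g b j y - y| + |g (XX g b j y)| := abs_add_le _ _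
        _ ≤ j * G + G := by gcongr
        _ ≤ (j + 1) * G := by nlinarith
    · rw [XX_succ]
      push_cast
      have h2 : XX g b j y + YY g b j y + g (XX g b j y) - (b + (j+1) * y)
          = (XX g b j y - (b + j * y)) + (YY g b j y - y) + g (XX g b j y) := by ring
      rw [h2]
      calc |(XX g b j y - (b + j * y)) + (YY g b j y - y) + g (XX g b j y)|
          ≤ |(XX g b j y - (b + j * y)) + (YY g b j y - y)| + |g (XX g b j y)| := abs_add_le _ _
        _ ≤ |XX g b j y - (b + j * y)| + |YY g b j y - y| + |g (XX g b j y)| := by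
            gcongr; exact abs_add_le _ _
        _ ≤ j * j * G + j * G + G := by gcongr
        _ ≤ (j + 1) * (j + 1) * G := by nlinarith

section Fiber
variable {G : ℝ} (hg : Continuous g) (hG : ∀ x, |g x| ≤ G) {a : ℝ} {q : ℕ}

/-- the fiber over b: y-values whose q-th iterate has first coordinate a -/
def fib (g : ℝ → ℝ) (b a : ℝ) (q : ℕ) : Set ℝ := {y : ℝ | XX g b q y = a}

lemma hG0 (hG : ∀ x, |g x| ≤ G) : 0 ≤ G := le_trans (abs_nonneg _) (hG 0)

include hG in
lemma fib_bddBelow (hq : 1 ≤ q) : ∀ y ∈ fib g b a q, min 0 (a - b - q*q*G) ≤ y := by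
  intro y hy
  have hb := (bndXY (b := b) hG q y).2
  have hy' : XX g b q y = a := hy
  rw [hy'] at hb
  have habs := abs_le.mp hb
  rcases le_or_gt 0 y with h0 | h0
  · exact le_trans (min_le_left _ _) h0
  · refine le_trans (min_le_right _ _) ?_
    have hqy : (q : ℝ) * y ≤ y := by
      have : (1:ℝ) ≤ q := by exact_mod_cast hq
      nlinarith
    nlinarith [habs.1]

include hG in
lemma fib_bddAbove (hq : 1 ≤ q) : ∀ y ∈ fib g b a q, y ≤ max 0 (a - b + q*q*G) := by
  intro y hy
  have hb := (bndXY (b := b) hG q y).2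
  have hy' : XX g b q y = a := hy
  rw [hy'] at hb
  have habs := abs_le.mp hb
  rcases le_or_gt y 0 with h0 | h0
  · exact le_trans h0 (le_max_left _ _)
  · refine le_trans ?_ (le_max_right _ _)
    have hqy : y ≤ (q : ℝ) * y := by
      have : (1:ℝ) ≤ q := by exact_mod_cast hq
      nlinarith
    nlinarith [habs.2]

include hg hG in
lemma fib_nonempty (hq : 1 ≤ q) : (fib g b a q).Nonempty := by
  have hG0 : 0 ≤ G := hG0 hG
  set M : ℝ := |a - b| + q*q*G + 1 with hM
  have hM0 : 0 ≤ M := by positivity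
  have h1 : (1:ℝ) ≤ q := by exact_mod_cast hq
  have hlo : XX g b q (-M) ≤ a := by
    have hb := (bndXY (b := b) hG q (-M)).2
    have habs := abs_le.mp hb
    have hqy : (q:ℝ) * (-M) ≤ -M := by nlinarith
    nlinarith [abs_nonneg (a-b), le_abs_self (a-b), neg_abs_le (a-b), habs.2]
  have hhi : a ≤ XX g b q M := by
    have hb := (bndXY (b := b) hG q M).2
    have habs := abs_le.mp hb
    have hqy : M ≤ (q:ℝ) * M := by nlinarith
    nlinarith [le_abs_self (a-b), neg_abs_le (a-b), habs.1]
  have hcont : ContinuousOn (XX g b q) (Set.Icc (-M) M) := ((cont_XY hg q).1).continuousOn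
  have hsub := intermediate_value_Icc (by linarith : (-M:ℝ) ≤ M) hcont
  have : a ∈ Set.Icc (XX g b q (-M)) (XX g b q M) := ⟨hlo, hhi⟩
  obtain ⟨z, _, hz⟩ := hsub this
  exact ⟨z, hz⟩

include hg in
lemma fib_closed : IsClosed (fib g b a q) :=
  isClosed_eq (cont_XY hg q).1 continuous_const

include hg hG in
lemma below_inf (hq : 1 ≤ q) {y : ℝ} (hy : y < sInf (fib g b a q)) :
    XX g b q y < a := by
  by_contra hge
  push_neg at hge
  have hG0 : 0 ≤ G := hG0 hG
  have h1 : (1:ℝ) ≤ q := by exact_mod_cast hq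
  set M : ℝ := |a - b| + q*q*G + 1 with hM
  have hM0 : 0 ≤ M := by positivity
  set w : ℝ := min y (-M) with hw
  have hlo : XX g b q w ≤ a := by
    have hb := (bndXY (b := b) hG q w).2
    have habs := abs_le.mp hb
    have hw0 : w ≤ -M := min_le_right _ _
    have hwneg : w ≤ 0 := by linarith
    have hqy : (q:ℝ) * w ≤ w := by nlinarith
    nlinarith [le_abs_self (a-b), neg_abs_le (a-b), habs.2]
  have hcont : ContinuousOn (XX g b q) (Set.Icc w y) := ((cont_XY hg q).1).continuousOn
  have hsub := intermediate_value_Icc (min_le_left y (-M)) hcont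
  obtain ⟨z, hzI, hz⟩ := hsub ⟨hlo, hge⟩
  have hzS : z ∈ fib g b a q := hz
  have : sInf (fib g b a q) ≤ z :=
    csInf_le ⟨min 0 (a - b - q*q*G), fun t ht => fib_bddBelow hG hq t ht⟩ hzS
  have : sInf (fib g b a q) ≤ y := le_trans this hzI.2
  linarith

include hg hG in
lemma above_sup (hq : 1 ≤ q) {y : ℝ} (hy : sSup (fib g b a q) < y) :
    a < XX g b q y := by
  by_contra hge
  push_neg at hge
  have hG0 : 0 ≤ G := hG0 hG
  have h1 : (1:ℝ) ≤ q := by exact_mod_cast hq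
  set M : ℝ := |a - b| + q*q*G + 1 with hM
  have hM0 : 0 ≤ M := by positivity
  set w : ℝ := max y M with hw
  have hhi : a ≤ XX g b q w := by
    have hb := (bndXY (b := b) hG q w).2
    have habs := abs_le.mp hb
    have hw0 : M ≤ w := le_max_right _ _
    have hwpos : 0 ≤ w := by linarith
    have hqy : w ≤ (q:ℝ) * w := by nlinarith
    nlinarith [le_abs_self (a-b), neg_abs_le (a-b), habs.1]
  have hcont : ContinuousOn (XX g b q) (Set.Icc y w) := ((cont_XY hg q).1).continuousOn
  have hsub := intermediate_value_Icc (le_max_left y M) hcont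
  obtain ⟨z, hzI, hz⟩ := hsub ⟨hge, hhi⟩
  have hzS : z ∈ fib g b a q := hz
  have : z ≤ sSup (fib g b a q) :=
    le_csSup ⟨max 0 (a - b + q*q*G), fun t ht => fib_bddAbove hG hq t ht⟩ hzS
  linarith [hzI.1]

end Fiber

section Key
variable {G : ℝ} {a : ℝ} {q : ℕ}

/-- KEY LEMMA: the minimal fiber point minimizes `XX (q-1)` over the fiber. -/
lemma key_min (hg : Continuous g) (hG : ∀ x, |g x| ≤ G) (hq : 1 ≤ q)
    {ys : ℝ} (hys : ys ∈ fib g b a q) :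
    XX g b (q-1) (sInf (fib g b a q)) ≤ XX g b (q-1) ys := by
  have hG0 : 0 ≤ G := hG0 hG
  set S := fib g b a q with hS
  have hSne : S.Nonempty := ⟨ys, hys⟩
  have hSbdb : BddBelow S := ⟨min 0 (a - b - q*q*G), fun t ht => fib_bddBelow hG hq t ht⟩
  have hScl : IsClosed S := fib_closed hg
  set y0 : ℝ := sInf S with hy0
  have hy0S : y0 ∈ S := hScl.csInf_mem hSne hSbdb
  have hy0le : y0 ≤ ys := csInf_le hSbdb hys
  by_contra hlt
  push_neg at hlt
  -- q = 1 is impossible since XX 0 is constant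
  rcases Nat.lt_or_ge q 2 with hq1 | hq2
  · interval_cases q
    · simp [XX_zero] at hlt
  -- now q ≥ 2
  have hq1R : (1:ℝ) ≤ q := by exact_mod_cast hq
  set E : Set ℝ := {y | y ≤ y0 ∧ ∀ j, 1 ≤ j → j ≤ q - 1 → XX g b j y ≤ XX g b j ys} with hE
  -- E is nonempty
  have hEne : E.Nonempty := by
    set L : ℝ := min y0 (min 0 (-(q * |ys|) - 2*(q*q)*G - |b| - |b|)) with hL
    refine ⟨L, le_trans (min_le_left _ _) le_rfl, ?_⟩
    intro j hj1 hjq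
    have hjq' : (j:ℝ) ≤ q := by exact_mod_cast le_trans hjq (Nat.sub_le q 1)
    have hj1R : (1:ℝ) ≤ j := by exact_mod_cast hj1
    have hL0 : L ≤ 0 := le_trans (min_le_right _ _) (min_le_left _ _)
    have hL1 : L ≤ -(q * |ys|) - 2*(q*q)*G - |b| - |b| :=
      le_trans (min_le_right _ _) (min_le_right _ _)
    have hbX := (bndXY (b := b) hG j L).2
    have hbY := (bndXY (b := b) hG j ys).2
    have h1 := (abs_le.mp hbX).2
    have h2 := (abs_le.mp hbY).1
    -- XX j L ≤ b + j L + j² G ≤ b + L + q² G;   c j ≥ b + j ys - q² G ≥ b - q|ys| - q² G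
    have hjj : (j:ℝ)*j*G ≤ (q:ℝ)*q*G := by
      have h4 : (j:ℝ)*j ≤ (q:ℝ)*q := by nlinarith
      nlinarith
    have hjL : (j:ℝ)*L ≤ L := by nlinarith
    have hjys : -((q:ℝ) * |ys|) ≤ (j:ℝ)*ys := by
      have h3 : -|ys| ≤ ys := neg_abs_le ys
      have : (j:ℝ) * |ys| ≤ (q:ℝ) * |ys| := by nlinarith [abs_nonneg ys]
      nlinarith [abs_nonneg ys]
    have hbb : -|b| ≤ b ∧ b ≤ |b| := ⟨neg_abs_le b, le_abs_self b⟩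
    nlinarith
  have hEbdd : BddAbove E := ⟨y0, fun t ht => ht.1⟩
  have hEcl : IsClosed E := by
    have : E = {y | y ≤ y0} ∩ ⋂ j ∈ Finset.Icc 1 (q-1), {y | XX g b j y ≤ XX g b j ys} := by
      ext t
      simp only [Set.mem_inter_iff, Set.mem_setOf_eq, Set.mem_iInter, Finset.mem_Icc, hE]
      constructor
      · rintro ⟨h1, h2⟩; exact ⟨h1, fun j hj => h2 j hj.1 hj.2⟩
      · rintro ⟨h1, h2⟩; exact ⟨h1, fun j hj1 hj2 => h2 j ⟨hj1, hj2⟩⟩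
    rw [this]
    refine (isClosed_le continuous_id continuous_const).inter (isClosed_biInter fun j _ => ?_)
    exact isClosed_le (cont_XY hg j).1 continuous_const
  set yf : ℝ := sSup E with hyf
  have hyfE : yf ∈ E := hEcl.csSup_mem hEne hEbdd
  have hyflt : yf < y0 := by
    rcases lt_or_eq_of_le hyfE.1 with h | h
    · exact h
    · exfalso
      have := hyfE.2 (q-1) (by omega) le_rfl
      rw [h] at this
      exact absurd (lt_of_le_of_lt this hlt) (lt_irrefl _)
  -- the set of indices where equality holds
  set Jset : Finset ℕ := (Finset.Icc 1 (q-1)).filter (fun j => XX g b j yf = XX g b j ys) with hJ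
  rcases Finset.eq_empty_or_nonempty Jset with hJe | hJne
  · -- all inequalities strict: contradict maximality of yf
    have hstrict : ∀ j, 1 ≤ j → j ≤ q - 1 → XX g b j yf < XX g b j ys := by
      intro j hj1 hj2
      rcases lt_or_eq_of_le (hyfE.2 j hj1 hj2) with h | h
      · exact h
      · exfalso
        have : j ∈ Jset := Finset.mem_filter.mpr ⟨Finset.mem_Icc.mpr ⟨hj1, hj2⟩, h⟩
        simp [hJe] at this
    set U : Set ℝ := (Set.Iio y0) ∩ ⋂ j ∈ Finset.Icc 1 (q-1), {y | XX g b j y < XX g b j ys} with hU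
    have hUopen : IsOpen U := by
      refine isOpen_Iio.inter (isOpen_biInter_finset fun j _ => ?_)
      exact isOpen_lt (cont_XY hg j).1 continuous_const
    have hyfU : yf ∈ U := by
      refine ⟨hyflt, Set.mem_iInter₂.mpr fun j hj => ?_⟩
      have hj' := Finset.mem_Icc.mp hj
      exact hstrict j hj'.1 hj'.2
    obtain ⟨ε, hε, hball⟩ := Metric.isOpen_iff.mp hUopen yf hyfU
    have htU : yf + ε/2 ∈ U := by
      apply hball
      have hd : dist (yf + ε/2) yf = ε/2 := by
        rw [Real.dist_eq]
        have h5 : yf + ε/2 - yf = ε/2 := by ring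
        rw [h5, abs_of_pos (by linarith)]
      rw [Metric.mem_ball, hd]
      linarith
    have htE : yf + ε/2 ∈ E := by
      refine ⟨le_of_lt htU.1, fun j hj1 hj2 => ?_⟩
      have := Set.mem_iInter₂.mp htU.2 j (Finset.mem_Icc.mpr ⟨hj1, hj2⟩)
      exact le_of_lt this
    have := le_csSup hEbdd htE
    linarith
  · -- take the largest equality index
    set js : ℕ := Jset.max' hJne with hjs
    have hjsJ : js ∈ Jset := Jset.max'_mem hJne
    have hjsIcc := (Finset.mem_filter.mp hjsJ).1
    have hjseq : XX g b js yf = XX g b js ys := (Finset.mem_filter.mp hjsJ).2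
    have hjs1 : 1 ≤ js := (Finset.mem_Icc.mp hjsIcc).1
    have hjsq : js ≤ q - 1 := (Finset.mem_Icc.mp hjsIcc).2
    -- strictness above js
    have hnext : XX g b (js+1) yf < XX g b (js+1) ys := by
      by_cases hj : js + 1 ≤ q - 1
      · rcases lt_or_eq_of_le (hyfE.2 (js+1) (by omega) hj) with h | h
        · exact h
        · exfalso
          have hmem : js + 1 ∈ Jset := Finset.mem_filter.mpr ⟨Finset.mem_Icc.mpr ⟨by omega, hj⟩, h⟩
          have := Finset.le_max' Jset (js+1) hmem
          omega
      · -- js = q-1, so js+1 = q; use below_inf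
        have hjq : js + 1 = q := by omega
        rw [hjq]
        have h1 : XX g b q yf < a := below_inf hg hG hq (by rw [← hy0]; exact hyflt)
        have h2 : XX g b q ys = a := hys
        rw [h2]
        exact h1
    rcases Nat.lt_or_ge js 2 with hjs2 | hjs2
    · -- js = 1: contradict strict monotonicity of XX 1
      have hjs1' : js = 1 := by omega
      have h6 : XX g b 1 yf = XX g b 1 ys := by
        rw [← hjs1']
        exact hjseq
      rw [XX_one, XX_one] at h6
      have h7 : yf = ys := by linarith
      linarith
    · -- js ≥ 2: use the recurrence to contradict membership at js - 1
      obtain ⟨k, hk⟩ : ∃ k, js = k + 2 := ⟨js - 2, by omega⟩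
      have h2 := rec2 (g := g) (b := b) (k+1) yf
      have h3 := rec2 (g := g) (b := b) (k+1) ys
      -- XX (k+3) = 2 XX (k+2) + g (XX (k+2)) - XX (k+1)
      have hkk : k + 1 + 2 = js + 1 := by omega
      have hkk2 : k + 1 + 1 = js := by omega
      rw [hkk, hkk2] at h2 h3
      rw [hjseq] at h2
      have hge : XX g b (k+1) ys < XX g b (k+1) yf := by
        rw [h2, h3] at hnext
        linarith
      have hmem := hyfE.2 (k+1) (by omega) (by omega)
      linarith


/-- reflection: iterates for the reflected system are negated -/
lemma XXYY_neg (j : ℕ) (y : ℝ) :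
    XX (fun t => -g (-t)) (-b) j (-y) = -(XX g b j y) ∧
    YY (fun t => -g (-t)) (-b) j (-y) = -(YY g b j y) := by
  induction j with
  | zero => exact ⟨rfl, rfl⟩
  | succ j ih =>
    obtain ⟨hX, hY⟩ := ih
    constructor
    · rw [XX_succ, XX_succ, hX, hY]
      simp only [neg_neg]
      ring
    · rw [YY_succ, YY_succ, hX, hY]
      simp only [neg_neg]
      ring

lemma key_max (hg : Continuous g) (hG : ∀ x, |g x| ≤ G) (hq : 1 ≤ q)
    {ys : ℝ} (hys : ys ∈ fib g b a q) :
    XX g b (q-1) ys ≤ XX g b (q-1) (sSup (fib g b a q)) := by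
  set g' : ℝ → ℝ := fun t => -g (-t) with hg'
  have hg'c : Continuous g' := (hg.comp continuous_neg).neg
  have hg'G : ∀ x, |g' x| ≤ G := fun x => by rw [hg', abs_neg]; exact hG (-x)
  have hrefl : ∀ (j : ℕ) (y : ℝ), XX g' (-b) j (-y) = -(XX g b j y) :=
    fun j y => (XXYY_neg (g := g) (b := b) j y).1
  have hrefl' : ∀ (j : ℕ) (y : ℝ), XX g' (-b) j y = -(XX g b j (-y)) := by
    intro j y
    have := hrefl j (-y)
    rwa [neg_neg] at this
  have hfib : fib g' (-b) (-a) q = -(fib g b a q) := by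
    ext y
    show XX g' (-b) q y = -a ↔ XX g b q (-y) = a
    rw [hrefl' q y]
    constructor
    · intro h; linarith
    · intro h; rw [h]
  have hys' : -ys ∈ fib g' (-b) (-a) q := by
    rw [hfib]
    simpa using hys
  have hkey := key_min (b := -b) hg'c hg'G hq hys'
  rw [hfib] at hkey
  have hinf : sInf (-(fib g b a q)) = -sSup (fib g b a q) := by
    rw [Real.sInf_def, neg_neg]
  rw [hinf] at hkey
  rw [hrefl' (q-1) (-(sSup (fib g b a q))), hrefl' (q-1) (-ys), neg_neg, neg_neg] at hkey
  linarith

end Key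

-- ### AddCircle basics
lemma rep_coe (x : AddCircle (1:ℝ)) : ((rep x : ℝ) : AddCircle (1:ℝ)) = x :=
  (AddCircle.equivIco 1 0).symm_apply_apply x

lemma coe_add' (u v : ℝ) : ((u + v : ℝ) : AddCircle (1:ℝ)) = (u : AddCircle (1:ℝ)) + (v:ℝ) := rfl

lemma coe_int_zero (n : ℤ) : ((n : ℝ) : AddCircle (1:ℝ)) = 0 := by
  rw [AddCircle.coe_eq_zero_iff]
  exact ⟨n, by simp⟩

lemma coe_eq_coe {u v : ℝ} (h : (u : AddCircle (1:ℝ)) = v) : ∃ n : ℤ, u = v + n := by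
  have h2 : ((u - v : ℝ) : AddCircle (1:ℝ)) = 0 := by
    rw [sub_eq_add_neg, coe_add']
    simp [h]
  rw [AddCircle.coe_eq_zero_iff] at h2
  obtain ⟨n, hn⟩ := h2
  exact ⟨n, by simp at hn; linarith [hn]⟩

section Per
variable {g : ℝ → ℝ} (hper : ∀ x, g (x + 1) = g x)

include hper in
lemma per_int : ∀ (n : ℤ) (x : ℝ), g (x + n) = g x := by
  have key : ∀ (m : ℕ) (x : ℝ), g (x + m) = g x := by
    intro m
    induction m with
    | zero => simp
    | succ m ih =>
      intro x
      push_cast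
      have : x + (m + 1) = (x + 1) + m := by ring
      rw [this, ih, hper]
  intro n x
  rcases le_or_gt 0 n with h | h
  · obtain ⟨m, rfl⟩ := Int.eq_ofNat_of_zero_le h
    push_cast
    exact key m x
  · obtain ⟨m, hm⟩ : ∃ m : ℕ, n = -(m:ℤ) := ⟨n.natAbs, by omega⟩
    subst hm
    have := key m (x - m)
    push_cast
    push_cast at this
    rw [sub_add_cancel] at this
    have h3 : x + -(m:ℝ) = x - m := by ring
    rw [h3, ← this]

include hper in
lemma per_rep_coe (t : ℝ) : g (rep ((t : ℝ) : AddCircle (1:ℝ))) = g t := by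
  obtain ⟨n, hn⟩ := coe_eq_coe (rep_coe ((t : ℝ) : AddCircle (1:ℝ)))
  rw [hn, per_int hper]

include hper in
lemma lift_shift (n : ℤ) : ∀ (j : ℕ) (t y : ℝ),
    (liftMap g)^[j] (t + n, y) = (((liftMap g)^[j] (t, y)).1 + n, ((liftMap g)^[j] (t, y)).2) := by
  intro j
  induction j with
  | zero => intro t y; rfl
  | succ j ih =>
    intro t y
    rw [Function.iterate_succ_apply, Function.iterate_succ_apply]
    have h1 : liftMap g (t + n, y) = ((liftMap g (t, y)).1 + n, (liftMap g (t, y)).2) := by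
      simp only [liftMap, per_int hper n t, Prod.mk.injEq]
      exact ⟨by ring, trivial⟩
    rw [h1]
    have h2 := ih (liftMap g (t,y)).1 (liftMap g (t,y)).2
    simpa using h2

include hper in
lemma semiconj (Z : ℝ × ℝ) : inducedMap g (projCyl Z) = projCyl (liftMap g Z) := by
  obtain ⟨t, y⟩ := Z
  simp only [inducedMap, projCyl, liftMap]
  have hg : g (rep ((t : ℝ) : AddCircle (1:ℝ))) = g t := per_rep_coe hper t
  rw [hg]
  have h4 : t + y + g t = t + (y + g t) := by ring
  have h5 : ((t + y + g t : ℝ) : AddCircle (1:ℝ)) = (t : AddCircle (1:ℝ)) + ((y + g t : ℝ)) := by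
    rw [h4, coe_add']
  rw [h5]

end Per

section Fibers
variable {g : ℝ → ℝ} (hper : ∀ x, g (x + 1) = g x)

include hper in
lemma semiconj_iter (q : ℕ) (Z : ℝ × ℝ) :
    (inducedMap g)^[q] (projCyl Z) = projCyl ((liftMap g)^[q] Z) := by
  induction q with
  | zero => rfl
  | succ q ih =>
    rw [Function.iterate_succ_apply', Function.iterate_succ_apply', ih, semiconj hper]

include hper in
lemma fiber_eq (s : ℤ) (q : ℕ) (x : AddCircle (1:ℝ)) :
    {y : ℝ | (x, y) ∈ Kset g s q} = {y : ℝ | XX g (rep x) q y = rep x + s} := by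
  ext y
  simp only [Set.mem_setOf_eq, Kset, Set.mem_image]
  constructor
  · rintro ⟨Z, hZ, hproj⟩
    obtain ⟨t, y'⟩ := Z
    have h1 : ((t : ℝ) : AddCircle (1:ℝ)) = x := congrArg Prod.fst hproj
    have h2 : y' = y := congrArg Prod.snd hproj
    rw [← rep_coe x] at h1
    obtain ⟨n, hn⟩ := coe_eq_coe h1
    have hZ' : ((liftMap g)^[q] (t, y')).1 = t + s := hZ
    rw [hn, h2] at hZ'
    rw [lift_shift hper n q (rep x) y] at hZ'
    simp only [XX]
    simp at hZ'
    linarith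
  · intro hy
    refine ⟨(rep x, y), ?_, ?_⟩
    · show ((liftMap g)^[q] (rep x, y)).1 = rep x + s
      exact hy
    · simp only [projCyl, rep_coe]

include hper in
lemma imgfiber_eq (s : ℤ) (q : ℕ) (x : AddCircle (1:ℝ)) :
    {y : ℝ | (x, y) ∈ (inducedMap g)^[q] '' Kset g s q}
      = (fun y => YY g (rep x) q y) '' {y : ℝ | XX g (rep x) q y = rep x + s} := by
  ext Y
  simp only [Set.mem_setOf_eq, Kset, Set.mem_image]
  constructor
  · rintro ⟨z, ⟨Z, hZ, hproj⟩, himg⟩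
    obtain ⟨t, y'⟩ := Z
    rw [← hproj, semiconj_iter hper] at himg
    -- himg : projCyl (T^q (t,y')) = (x, Y)
    have h1 : (((liftMap g)^[q] (t, y')).1 : AddCircle (1:ℝ)) = x := congrArg Prod.fst himg
    have h2 : ((liftMap g)^[q] (t, y')).2 = Y := congrArg Prod.snd himg
    have hZ' : ((liftMap g)^[q] (t, y')).1 = t + s := hZ
    rw [hZ'] at h1
    have h3 : ((t : ℝ) : AddCircle (1:ℝ)) = x := by
      rw [← h1, coe_add', coe_int_zero, add_zero]
    rw [← rep_coe x] at h3
    obtain ⟨n, hn⟩ := coe_eq_coe h3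
    subst hn
    have hs := lift_shift hper n q (rep x) y'
    refine ⟨y', ?_, ?_⟩
    · show XX g (rep x) q y' = rep x + s
      rw [hs] at hZ'
      simp only [XX]
      simp at hZ'
      linarith
    · show YY g (rep x) q y' = Y
      rw [hs] at h2
      simp at h2
      exact h2
  · rintro ⟨y, hy, hYY⟩
    refine ⟨projCyl (rep x, y), ⟨(rep x, y), hy, rfl⟩, ?_⟩
    rw [semiconj_iter hper]
    have hXq : ((liftMap g)^[q] (rep x, y)).1 = rep x + s := hy
    simp only [projCyl, hXq]
    have : ((rep x + (s:ℝ) : ℝ) : AddCircle (1:ℝ)) = x := by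
      rw [coe_add', coe_int_zero, add_zero, rep_coe]
    rw [this]
    rw [← hYY]
    rfl

end Fibers

end Stmt10aux

/-- T̂^q(x, μ⁻(x)) = (x, ν⁺(x)) and T̂^q(x, μ⁺(x)) = (x, ν⁻(x)). -/
theorem stmt10 (g : ℝ → ℝ) (hLip : ∃ K, LipschitzWith K g)
    (hper : ∀ x, g (x + 1) = g x) (hint : ∫ x in (0:ℝ)..1, g x = 0)
    (s : ℤ) (q : ℕ) (hq : 1 ≤ q) :
    ∀ x : AddCircle (1:ℝ),
      (inducedMap g)^[q] (x, muMinus g s q x) = (x, nuPlus g s q x) ∧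
      (inducedMap g)^[q] (x, muPlus g s q x) = (x, nuMinus g s q x) := by
  classical
  obtain ⟨K, hK⟩ := hLip
  have hg : Continuous g := hK.continuous
  set G : ℝ := |g 0| + K with hGdef
  have hG : ∀ t, |g t| ≤ G := by
    intro t
    have h1 : g t = g (Int.fract t) := by
      have h2 := Stmt10aux.per_int hper ⌊t⌋ (Int.fract t)
      rw [Int.fract_add_floor] at h2
      exact h2
    have h3 : dist (g (Int.fract t)) (g 0) ≤ (K:ℝ) * dist (Int.fract t) 0 := hK.dist_le_mul _ _
    rw [Real.dist_eq, Real.dist_eq, sub_zero] at h3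
    have h4 : |Int.fract t| ≤ 1 := by
      rw [abs_of_nonneg (Int.fract_nonneg t)]
      exact le_of_lt (Int.fract_lt_one t)
    have h5 : |g (Int.fract t)| ≤ |g (Int.fract t) - g 0| + |g 0| := by
      calc |g (Int.fract t)| = |(g (Int.fract t) - g 0) + g 0| := by ring_nf
        _ ≤ |g (Int.fract t) - g 0| + |g 0| := abs_add_le _ _
    have h6 : (0:ℝ) ≤ K := K.coe_nonneg
    rw [h1]
    nlinarith
  intro x
  set b : ℝ := rep x with hb
  set S : Set ℝ := Stmt10aux.fib g b (b + s) q with hS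
  have hfib : {y : ℝ | (x, y) ∈ Kset g s q} = S := Stmt10aux.fiber_eq hper s q x
  have himg : {y : ℝ | (x, y) ∈ (inducedMap g)^[q] '' Kset g s q}
      = (fun y => Stmt10aux.YY g b q y) '' S := Stmt10aux.imgfiber_eq hper s q x
  have hSne : S.Nonempty := Stmt10aux.fib_nonempty hg hG hq
  have hSbdb : BddBelow S :=
    ⟨min 0 ((b + s) - b - q*q*G), fun t ht => Stmt10aux.fib_bddBelow hG hq t ht⟩
  have hSbda : BddAbove S :=
    ⟨max 0 ((b + s) - b + q*q*G), fun t ht => Stmt10aux.fib_bddAbove hG hq t ht⟩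
  have hScl : IsClosed S := Stmt10aux.fib_closed hg
  have hy0S : sInf S ∈ S := hScl.csInf_mem hSne hSbdb
  have hy1S : sSup S ∈ S := hScl.csSup_mem hSne hSbda
  have hq' : q - 1 + 1 = q := Nat.succ_pred_eq_of_pos hq
  -- value of YY on the fiber
  have hYval : ∀ y ∈ S, Stmt10aux.YY g b q y = (b + s) - Stmt10aux.XX g b (q-1) y := by
    intro y hy
    have h7 : Stmt10aux.YY g b (q-1+1) y
        = Stmt10aux.XX g b (q-1+1) y - Stmt10aux.XX g b (q-1) y := Stmt10aux.YY_eq_sub _ _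
    rw [hq'] at h7
    have h8 : Stmt10aux.XX g b q y = b + s := hy
    rw [h7, h8]
  -- the two image computations
  have hmain : ∀ y ∈ S, (inducedMap g)^[q] (x, y) = (x, Stmt10aux.YY g b q y) := by
    intro y hy
    have h9 : ((x : AddCircle (1:ℝ)), y) = projCyl (b, y) := by
      simp only [projCyl, hb, Stmt10aux.rep_coe]
    rw [h9, Stmt10aux.semiconj_iter hper]
    have h10 : ((liftMap g)^[q] (b, y)).1 = b + s := hy
    simp only [projCyl, h10]
    have h11 : ((b + (s:ℝ) : ℝ) : AddCircle (1:ℝ)) = x := by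
      rw [Stmt10aux.coe_add', Stmt10aux.coe_int_zero, add_zero, hb, Stmt10aux.rep_coe]
    rw [h11]
    rfl
  have hmu_minus : muMinus g s q x = sInf S := by
    rw [muMinus, hfib]
  have hmu_plus : muPlus g s q x = sSup S := by
    rw [muPlus, hfib]
  have hnu_plus : nuPlus g s q x = Stmt10aux.YY g b q (sInf S) := by
    rw [nuPlus, himg]
    have hub : ∀ z ∈ (fun y => Stmt10aux.YY g b q y) '' S, z ≤ Stmt10aux.YY g b q (sInf S) := by
      rintro z ⟨y, hy, rfl⟩
      show Stmt10aux.YY g b q y ≤ Stmt10aux.YY g b q (sInf S)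
      rw [hYval y hy, hYval _ hy0S]
      have := Stmt10aux.key_min (b := b) (a := b + s) hg hG hq hy
      linarith
    refine le_antisymm (csSup_le ⟨_, ⟨sInf S, hy0S, rfl⟩⟩ hub) ?_
    exact le_csSup ⟨_, hub⟩ ⟨sInf S, hy0S, rfl⟩
  have hnu_minus : nuMinus g s q x = Stmt10aux.YY g b q (sSup S) := by
    rw [nuMinus, himg]
    have hlb : ∀ z ∈ (fun y => Stmt10aux.YY g b q y) '' S, Stmt10aux.YY g b q (sSup S) ≤ z := by
      rintro z ⟨y, hy, rfl⟩
      show Stmt10aux.YY g b q (sSup S) ≤ Stmt10aux.YY g b q y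
      rw [hYval y hy, hYval _ hy1S]
      have := Stmt10aux.key_max (b := b) (a := b + s) hg hG hq hy
      linarith
    refine le_antisymm ?_ (le_csInf ⟨_, ⟨sSup S, hy1S, rfl⟩⟩ hlb)
    exact csInf_le ⟨_, hlb⟩ ⟨sSup S, hy1S, rfl⟩
  constructor
  · rw [hmu_minus, hnu_plus]
    exact hmain _ hy0S
  · rw [hmu_plus, hnu_minus]
    exact hmain _ hy1S


end
end

section
/- Let g̃₁, g̃₂ : ℝ→ℝ be Lipschitz, 1-periodic functions with zero mean over [0,1], let λ₁, λ₂ ∈ ℝ, and suppose g̃₁(x)+λ₁ ≤ g̃₂(x)+λ₂ for all x (so that T̃₁ ≤ T̃₂ in Le Calvez's order), where T̃ᵢ(x,y) = (x+y+g̃ᵢ(x)+λᵢ, y+g̃ᵢ(x)+λᵢ). Then for every triplet (s,p,q) ∈ ℤ×ℤ×ℕ*: if (s,p,q) is positive for T̃₁ then it is positive for T̃₂, and if (s,p,q) is negative for T̃₂ then it is negative for T̃₁. -/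
open Filter Topology

noncomputable section

/-- A triplet (s,p,q) is positive for the map determined by the effective function gg. -/
def IsPositiveTriplet (gg : ℝ → ℝ) (s p : ℤ) (q : ℕ) : Prop :=
  ∀ x : AddCircle (1:ℝ), (p : ℝ) < nuMinus gg s q x - muPlus gg s q x

/-- A triplet (s,p,q) is negative for the map determined by the effective function gg. -/
def IsNegativeTriplet (gg : ℝ → ℝ) (s p : ℤ) (q : ℕ) : Prop :=
  ∀ x : AddCircle (1:ℝ), nuPlus gg s q x - muMinus gg s q x < (p : ℝ)

namespace S12
noncomputable section
variable (G : ℝ → ℝ)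

def ox (a y : ℝ) (k : ℕ) : ℝ := ((liftMap G)^[k] (a, y)).1
def oy (a y : ℝ) (k : ℕ) : ℝ := ((liftMap G)^[k] (a, y)).2

variable {G} {a y : ℝ}

theorem ox_zero : ox G a y 0 = a := rfl
theorem oy_zero : oy G a y 0 = y := rfl

theorem ox_succ (k : ℕ) : ox G a y (k+1) = ox G a y k + oy G a y k + G (ox G a y k) := by
  unfold ox oy; rw [Function.iterate_succ_apply']; rfl

theorem oy_succ (k : ℕ) : oy G a y (k+1) = oy G a y k + G (ox G a y k) := by
  unfold ox oy; rw [Function.iterate_succ_apply']; rfl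

theorem ox_succ' (k : ℕ) : ox G a y (k+1) = ox G a y k + oy G a y (k+1) := by
  rw [ox_succ, oy_succ]; ring

theorem oy_eq_diff (k : ℕ) : oy G a y (k+1) = ox G a y (k+1) - ox G a y k := by
  rw [ox_succ']; ring

theorem ox_el (k : ℕ) :
    ox G a y (k+2) = 2 * ox G a y (k+1) - ox G a y k + G (ox G a y (k+1)) := by
  have h1 := ox_succ' (G := G) (a := a) (y := y) (k+1)
  have h2 := oy_succ (G := G) (a := a) (y := y) (k+1)
  have h3 := oy_eq_diff (G := G) (a := a) (y := y) k
  rw [h1, h2, h3]; ring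

theorem ox_one : ox G a y 1 = a + y + G a := by
  rw [ox_succ 0, ox_zero, oy_zero]

theorem continuous_ox (hG : Continuous G) (a : ℝ) (k : ℕ) :
    Continuous (fun y => ox G a y k) := by
  have h1 : Continuous (liftMap G) := by
    unfold liftMap; fun_prop
  unfold ox
  exact (continuous_fst.comp ((h1.iterate k).comp (by fun_prop)))

theorem continuous_oy (hG : Continuous G) (a : ℝ) (k : ℕ) :
    Continuous (fun y => oy G a y k) := by
  have h1 : Continuous (liftMap G) := by
    unfold liftMap; fun_prop
  unfold oy
  exact (continuous_snd.comp ((h1.iterate k).comp (by fun_prop)))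

theorem oy_bound {C : ℝ} (hC : ∀ x, |G x| ≤ C) (k : ℕ) :
    |oy G a y k - y| ≤ k * C := by
  induction k with
  | zero => simp [oy_zero]
  | succ n ih =>
    rw [oy_succ]
    have h2 := hC (ox G a y n)
    have : oy G a y n + G (ox G a y n) - y = (oy G a y n - y) + G (ox G a y n) := by ring
    rw [this]
    calc |(oy G a y n - y) + G (ox G a y n)| ≤ |oy G a y n - y| + |G (ox G a y n)| := abs_add_le _ _
      _ ≤ n * C + C := by gcongr
      _ = (n + 1 : ℕ) * C := by push_cast; ring

theorem ox_bound {C : ℝ} (hC : ∀ x, |G x| ≤ C) (k : ℕ) :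
    |ox G a y k - a - k * y| ≤ (k*k) * C := by
  have hC0 : 0 ≤ C := le_trans (abs_nonneg _) (hC 0)
  induction k with
  | zero => simp [ox_zero]
  | succ n ih =>
    rw [ox_succ']
    have h1 := oy_bound (G := G) (a := a) (y := y) hC (n+1)
    have he : ox G a y n + oy G a y (n+1) - a - (n+1:ℕ) * y
        = (ox G a y n - a - n * y) + (oy G a y (n+1) - y) := by push_cast; ring
    rw [he]
    calc |(ox G a y n - a - n*y) + (oy G a y (n+1) - y)|
        ≤ |ox G a y n - a - n*y| + |oy G a y (n+1) - y| := abs_add_le _ _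
      _ ≤ (n*n) * C + (n+1:ℕ) * C := by gcongr
      _ ≤ ((n+1:ℕ)*(n+1:ℕ)) * C := by
          push_cast
          nlinarith [hC0]

theorem ox_translate (hGper : ∀ (n : ℤ) (x : ℝ), G (x + n) = G x) (n : ℤ) (k : ℕ) :
    ox G (a + n) y k = ox G a y k + n ∧ oy G (a + n) y k = oy G a y k := by
  induction k with
  | zero => simp [ox_zero, oy_zero]
  | succ m ih =>
    obtain ⟨h1, h2⟩ := ih
    constructor
    · rw [ox_succ, ox_succ, h1, h2, hGper]; ring
    · rw [oy_succ, oy_succ, h1, h2, hGper]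

theorem hasDerivAt_sq_half (c u : ℝ) : HasDerivAt (fun u => (u - c)^2/2) (u - c) u := by
  have h := (((hasDerivAt_id u).sub_const c).pow 2).div_const 2
  simpa [id] using h.congr_deriv (show _ = u - c by norm_num [id])

theorem hasDerivAt_sq_half' (c u : ℝ) : HasDerivAt (fun u => (c - u)^2/2) (u - c) u := by
  have he : (fun u : ℝ => (c - u)^2/2) = fun u => (u - c)^2/2 := by
    funext t; ring
  rw [he]; exact hasDerivAt_sq_half c u

theorem deriv_nonneg_right (f : ℝ → ℝ) (d a b : ℝ) (hd : HasDerivAt f d a) (hab : a < b)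
    (hmin : ∀ u ∈ Set.Icc a b, f a ≤ f u) : 0 ≤ d := by
  have h1 : HasDerivWithinAt f d (Set.Ioi a) a := hd.hasDerivWithinAt
  rw [hasDerivWithinAt_iff_tendsto_slope' (by simp)] at h1
  refine ge_of_tendsto h1 ?_
  filter_upwards [Ioc_mem_nhdsGT_of_mem ⟨le_refl a, hab⟩] with u hu
  have h2 := hmin u ⟨le_of_lt hu.1, hu.2⟩
  rw [slope_def_field]
  exact div_nonneg (by linarith) (by linarith [hu.1])

theorem deriv_nonpos_left (f : ℝ → ℝ) (d a b : ℝ) (hd : HasDerivAt f d b) (hab : a < b)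
    (hmin : ∀ u ∈ Set.Icc a b, f b ≤ f u) : d ≤ 0 := by
  have h1 : HasDerivWithinAt f d (Set.Iio b) b := hd.hasDerivWithinAt
  rw [hasDerivWithinAt_iff_tendsto_slope' (by simp)] at h1
  refine le_of_tendsto h1 ?_
  filter_upwards [Ico_mem_nhdsLT_of_mem ⟨hab, le_refl b⟩] with u hu
  have h2 := hmin u ⟨hu.1, le_of_lt hu.2⟩
  rw [slope_def_field]
  exact div_nonpos_of_nonneg_of_nonpos (by linarith) (by linarith [hu.2])

/-- The key comparison lemma: a discrete BVP solution for `G` admits a solution for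
`G' ≤ G` with the same endpoints lying above it. -/
theorem key (G G' : ℝ → ℝ) (hG' : Continuous G') {C' : ℝ} (hC' : ∀ x, |G' x| ≤ C')
    (hle : ∀ x, G' x ≤ G x) (q : ℕ) (w : ℕ → ℝ)
    (hw : ∀ k, k + 2 ≤ q → w (k+2) = 2*w (k+1) - w k + G (w (k+1))) :
    ∃ v : ℕ → ℝ, v 0 = w 0 ∧ v q = w q ∧
      (∀ k, k + 2 ≤ q → v (k+2) = 2*v (k+1) - v k + G' (v (k+1))) ∧
      (∀ k, k ≤ q → w k ≤ v k) := by
  rcases lt_or_ge q 2 with hq2 | hq2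
  · refine ⟨w, rfl, rfl, fun k hk => by omega, fun k _ => le_refl _⟩
  have hq0 : (q:ℝ) ≠ 0 := by positivity
  have hC'0 : 0 ≤ C' := le_trans (abs_nonneg _) (hC' 0)
  -- primitive of G'
  set U : ℝ → ℝ := fun t => ∫ x in (0:ℝ)..t, G' x with hUdef
  have hU : ∀ u, HasDerivAt U (G' u) u := fun u =>
    intervalIntegral.integral_hasDerivAt_right (hG'.intervalIntegrable _ _)
      (hG'.stronglyMeasurableAtFilter _ _) hG'.continuousAt
  have hUc : Continuous U := by
    rw [continuous_iff_continuousAt]; exact fun u => (hU u).continuousAt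
  -- barrier
  set l : ℕ → ℝ := fun k => w 0 + (w q - w 0) * k / q with hldef
  have hrne : (Finset.range (q+1)).Nonempty := ⟨0, by simp⟩
  set m : ℝ := Finset.sup' (Finset.range (q+1)) hrne (fun k => |w k - l k|) with hmdef
  have hm : ∀ k, k ≤ q → |w k - l k| ≤ m := fun k hk =>
    Finset.le_sup' (f := fun k => |w k - l k|) (Finset.mem_range.mpr (by omega))
  have hm0 : 0 ≤ m := le_trans (abs_nonneg _) (hm 0 (by omega))
  set c : ℝ := C'/2 + 1 + m with hcdef
  have hc0 : 0 < c := by positivity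
  set P : ℕ → ℝ := fun k => l k + c * k * ((q:ℝ) - k) with hPdef
  have hl0 : l 0 = w 0 := by simp [hldef]
  have hlq : l q = w q := by
    simp only [hldef]; field_simp; ring
  have hP0 : P 0 = w 0 := by simp [hPdef, hl0]
  have hPq : P q = w q := by simp [hPdef, hlq]
  have hPw : ∀ k, 1 ≤ k → k + 1 ≤ q → w k + 1 ≤ P k := by
    intro k h1 h2
    have hmk := hm k (by omega)
    have hk1 : (1:ℝ) ≤ (k:ℝ) := by exact_mod_cast h1
    have hk2 : (1:ℝ) ≤ (q:ℝ) - k := by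
      have : (k:ℝ) + 1 ≤ q := by exact_mod_cast h2
      linarith
    have habs : l k - w k ≥ -m := by
      have := abs_le.mp hmk; linarith [this.1]
    have h3 : c ≤ c * (k:ℝ) := le_mul_of_one_le_right hc0.le hk1
    have h4 : c * (k:ℝ) ≤ (c * (k:ℝ)) * ((q:ℝ) - k) :=
      le_mul_of_one_le_right (by nlinarith) hk2
    have h5 : c * (k:ℝ) * ((q:ℝ) - k) ≥ c := by nlinarith
    have hc1 : 1 + m ≤ c := by simp only [hcdef]; linarith
    simp only [hPdef]
    linarith
  have hPdd : ∀ k : ℕ, P (k+2) + P k - 2 * P (k+1) = -2*c := by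
    intro k
    simp only [hPdef, hldef]
    push_cast
    field_simp
    ring
  -- the compact box
  set lo : ℕ → ℝ := fun k => if k = 0 then w 0 else if q ≤ k then w q else w k with hlodef
  set hi : ℕ → ℝ := fun k => if k = 0 then w 0 else if q ≤ k then w q else P k with hhidef
  have hlohi : lo ≤ hi := by
    intro k
    simp only [hlodef, hhidef]
    split_ifs with h1 h2
    · exact le_refl _
    · exact le_refl _
    · have := hPw k (by omega) (by omega); linarith
  -- the compact box Q
  have hQc : IsCompact (Set.Icc lo hi) := isCompact_Icc
  have hQne : (Set.Icc lo hi).Nonempty := ⟨lo, le_refl lo, hlohi⟩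
  -- the action functional
  set W : (ℕ → ℝ) → ℝ := fun v =>
    (∑ k ∈ Finset.range q, (v (k+1) - v k)^2/2) + ∑ k ∈ Finset.range q, U (v k) with hWdef
  have hWc : Continuous W := by
    apply Continuous.add
    · apply continuous_finset_sum
      intro i _
      have : Continuous fun v : ℕ → ℝ => v (i+1) - v i :=
        (continuous_apply (i+1)).sub (continuous_apply i)
      fun_prop
    · apply continuous_finset_sum
      intro i _
      exact hUc.comp (continuous_apply i)
  obtain ⟨v, hvQ, hmin⟩ := hQc.exists_isMinOn hQne hWc.continuousOn
  obtain ⟨hvlo, hvhi⟩ := hvQ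
  have hv0 : v 0 = w 0 := by
    have h1 := hvlo 0; have h2 := hvhi 0
    simp only [hlodef, hhidef, if_pos rfl] at h1 h2
    linarith
  have hvq : ∀ k, q ≤ k → v k = w q := by
    intro k hk
    have h1 := hvlo k; have h2 := hvhi k
    have hk0 : ¬ (k = 0) := by omega
    simp only [hlodef, hhidef, if_neg hk0, if_pos hk] at h1 h2
    linarith
  have hwv : ∀ k, k ≤ q → w k ≤ v k := by
    intro k hk
    rcases Nat.eq_or_lt_of_le hk with h | h
    · rw [h, hvq q (le_refl q)]
    rcases Nat.eq_zero_or_pos k with h0 | h0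
    · rw [h0, hv0]
    have h1 := hvlo k
    simp only [hlodef, if_neg (by omega : ¬ k = 0), if_neg (by omega : ¬ q ≤ k)] at h1
    exact h1
  have hvP : ∀ k, k ≤ q → v k ≤ P k := by
    intro k hk
    rcases Nat.eq_or_lt_of_le hk with h | h
    · rw [h, hvq q (le_refl q), hPq]
    rcases Nat.eq_zero_or_pos k with h0 | h0
    · rw [h0, hv0, hP0]
    have h1 := hvhi k
    simp only [hhidef, if_neg (by omega : ¬ k = 0), if_neg (by omega : ¬ q ≤ k)] at h1
    exact h1
  refine ⟨v, hv0, hvq q (le_refl q), ?_, hwv⟩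
  -- Euler-Lagrange at interior indices
  intro k hk
  set j := k + 1 with hjdef
  have hj1 : 1 ≤ j := by omega
  have hjq : j + 1 ≤ q := by omega
  have hjne0 : ¬ (j = 0) := by omega
  have hjltq : ¬ (q ≤ j) := by omega
  have hloj : lo j = w j := by simp only [hlodef, if_neg hjne0, if_neg hjltq]
  have hhij : hi j = P j := by simp only [hhidef, if_neg hjne0, if_neg hjltq]
  -- the one-variable function
  set ψ : ℝ → ℝ := fun u => W (Function.update v j u) with hψdef
  have hψmin : ∀ u ∈ Set.Icc (w j) (P j), ψ (v j) ≤ ψ u := by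
    intro u hu
    have hmem : Function.update v j u ∈ Set.Icc lo hi := by
      constructor
      · intro t
        rcases eq_or_ne t j with rfl | ht
        · rw [Function.update_self, hloj]; exact hu.1
        · rw [Function.update_of_ne ht]; exact hvlo t
      · intro t
        rcases eq_or_ne t j with rfl | ht
        · rw [Function.update_self, hhij]; exact hu.2
        · rw [Function.update_of_ne ht]; exact hvhi t
    have := hmin hmem
    simpa [hψdef, Function.update_eq_self] using this
  -- derivative of ψ
  have hψd : ∀ u : ℝ, HasDerivAt ψ ((u - v k) + (u - v (k+2)) + G' u) u := by
    intro u
    have hkmem : k ∈ Finset.range q := Finset.mem_range.mpr (by omega)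
    have hjmem : j ∈ Finset.range q := Finset.mem_range.mpr (by omega)
    have hkj : k ≠ j := by omega
    -- quadratic part
    have hquad : HasDerivAt (fun u => ∑ i ∈ Finset.range q,
        ((Function.update v j u) (i+1) - (Function.update v j u) i)^2/2)
        ((u - v k) + (u - v (k+2))) u := by
      have hsum : HasDerivAt (fun u => ∑ i ∈ Finset.range q,
          ((Function.update v j u) (i+1) - (Function.update v j u) i)^2/2)
          (∑ i ∈ Finset.range q, ((if i = k then u - v k else 0) +
            (if i = j then u - v (k+2) else 0))) u := by
        apply HasDerivAt.fun_sum
        intro i _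
        by_cases hik : i = k
        · -- term (u - v i)^2/2
          have hij1 : i + 1 = j := by omega
          have hinej : i ≠ j := by omega
          have he : (fun u : ℝ => ((Function.update v j u) (i+1) - (Function.update v j u) i)^2/2)
              = fun u : ℝ => (u - v i)^2/2 := by
            funext t
            rw [hij1, Function.update_self, Function.update_of_ne hinej]
          rw [he, if_pos hik, if_neg hinej, ← hik]
          simpa using hasDerivAt_sq_half (v i) u
        by_cases hij : i = j
        · -- term (v (i+1) - u)^2/2
          have hine : i + 1 ≠ j := by omega
          have he : (fun u : ℝ => ((Function.update v j u) (i+1) - (Function.update v j u) i)^2/2)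
              = fun u : ℝ => (v (i+1) - u)^2/2 := by
            funext t
            rw [show (Function.update v j t) i = t by rw [hij, Function.update_self],
              Function.update_of_ne hine]
          have hik2 : i + 1 = k + 2 := by omega
          rw [he, if_neg hik, if_pos hij, ← hik2]
          simpa using hasDerivAt_sq_half' (v (i+1)) u
        · have hine : i + 1 ≠ j := by omega
          have he : (fun u : ℝ => ((Function.update v j u) (i+1) - (Function.update v j u) i)^2/2)
              = fun _ : ℝ => (v (i+1) - v i)^2/2 := by
            funext t
            rw [Function.update_of_ne hine, Function.update_of_ne hij]
          rw [he, if_neg hik, if_neg hij]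
          simpa using hasDerivAt_const u ((v (i+1) - v i)^2/2)
      convert hsum using 1
      rw [Finset.sum_add_distrib, Finset.sum_ite_eq' (Finset.range q) k,
        Finset.sum_ite_eq' (Finset.range q) j, if_pos hkmem, if_pos hjmem]
    -- potential part
    have hpot : HasDerivAt (fun u => ∑ i ∈ Finset.range q, U ((Function.update v j u) i))
        (G' u) u := by
      have hsum : HasDerivAt (fun u => ∑ i ∈ Finset.range q, U ((Function.update v j u) i))
          (∑ i ∈ Finset.range q, (if i = j then G' u else 0)) u := by
        apply HasDerivAt.fun_sum
        intro i _
        by_cases hij : i = j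
        · have he : (fun u : ℝ => U ((Function.update v j u) i)) = U := by
            funext t; rw [hij, Function.update_self]
          rw [he, if_pos hij]
          exact hU u
        · have he : (fun u : ℝ => U ((Function.update v j u) i)) = fun _ => U (v i) := by
            funext t; rw [Function.update_of_ne hij]
          rw [he, if_neg hij]
          exact hasDerivAt_const u (U (v i))
      convert hsum using 1
      rw [Finset.sum_ite_eq' (Finset.range q) j, if_pos hjmem]
    simp only [hψdef, hWdef]; exact hquad.add hpot
  -- trichotomy
  have hwvj : w j ≤ v j := hwv j (by omega)
  have hvPj : v j ≤ P j := hvP j (by omega)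
  have hwPj : w j < P j := by have := hPw j hj1 hjq; linarith
  have hELw : w (k+2) = 2*w (k+1) - w k + G (w (k+1)) := hw k hk
  rcases eq_or_lt_of_le hwvj with hlow | hlow
  · -- lower contact
    have hψmin' : ∀ u ∈ Set.Icc (v j) (P j), ψ (v j) ≤ ψ u := fun u hu =>
      hψmin u ⟨(le_of_eq hlow).trans hu.1, hu.2⟩
    have hd := deriv_nonneg_right ψ _ (v j) (P j) (hψd (v j)) (by rw [← hlow]; exact hwPj) hψmin'
    rw [← hlow] at hd
    have hG'G := hle (w j)
    have hvk : w k ≤ v k := hwv k (by omega)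
    have hvk2 : w (k+2) ≤ v (k+2) := hwv (k+2) hk
    simp only [hjdef] at hd hG'G hlow ⊢
    have hvkeq : v k = w k := by linarith
    have hvk2eq : v (k+2) = w (k+2) := by linarith
    have hGeq : G' (w (k+1)) = G (w (k+1)) := by linarith
    rw [hvk2eq, hvkeq, ← hlow, hGeq]
    exact hELw
  rcases eq_or_lt_of_le hvPj with hup | hup
  · -- upper contact: contradiction
    exfalso
    have hmin' : ∀ u ∈ Set.Icc (w j) (P j), ψ (P j) ≤ ψ u := by
      intro u hu; rw [← hup]; exact hψmin u hu
    have hder : HasDerivAt ψ ((P j - v k) + (P j - v (k+2)) + G' (P j)) (P j) := by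
      rw [← hup]; exact hψd (v j)
    have hd := deriv_nonpos_left ψ _ (w j) (P j) hder hwPj hmin'
    have hPk : v k ≤ P k := hvP k (by omega)
    have hPk2 : v (k+2) ≤ P (k+2) := hvP (k+2) hk
    have hdd := hPdd k
    have hG'P := (abs_le.mp (hC' (P j))).1
    have h2c : C' + 2 ≤ 2*c := by simp only [hcdef]; linarith
    simp only [hjdef] at hd hdd hG'P
    linarith
  · -- interior
    have hloc : IsLocalMin ψ (v j) := by
      apply IsMinOn.isLocalMin (s := Set.Icc (w j) (P j))
      · intro u hu; exact hψmin u hu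
      · exact Icc_mem_nhds hlow hup
    have hd0 := hloc.hasDerivAt_eq_zero (hψd (v j))
    simp only [hjdef] at hd0 ⊢
    linarith [hd0]

/-- Reflected version of `key`: a companion solution below, for the larger function. -/
theorem key_down (G G' : ℝ → ℝ) (hG : Continuous G) {C : ℝ} (hC : ∀ x, |G x| ≤ C)
    (hle : ∀ x, G' x ≤ G x) (q : ℕ) (w : ℕ → ℝ)
    (hw : ∀ k, k + 2 ≤ q → w (k+2) = 2*w (k+1) - w k + G' (w (k+1))) :
    ∃ v : ℕ → ℝ, v 0 = w 0 ∧ v q = w q ∧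
      (∀ k, k + 2 ≤ q → v (k+2) = 2*v (k+1) - v k + G (v (k+1))) ∧
      (∀ k, k ≤ q → v k ≤ w k) := by
  set RG : ℝ → ℝ := fun x => - G (-x) with hRGdef
  set RG' : ℝ → ℝ := fun x => - G' (-x) with hRG'def
  have hRGc : Continuous RG := by fun_prop
  have hRGb : ∀ x, |RG x| ≤ C := by
    intro x; simp only [hRGdef, abs_neg]; exact hC (-x)
  have hRle : ∀ x, RG x ≤ RG' x := by
    intro x; simp only [hRGdef, hRG'def]; linarith [hle (-x)]
  set wb : ℕ → ℝ := fun k => - w k with hwbdef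
  have hwb : ∀ k, k + 2 ≤ q → wb (k+2) = 2*wb (k+1) - wb k + RG' (wb (k+1)) := by
    intro k hk
    simp only [hwbdef, hRG'def, neg_neg]
    have := hw k hk
    linarith
  obtain ⟨vb, hvb0, hvbq, hEL, hge⟩ := key RG' RG hRGc hRGb hRle q wb hwb
  refine ⟨fun k => - vb k, by simp [hvb0, hwbdef], by simp [hvbq, hwbdef], ?_, ?_⟩
  · intro k hk
    have := hEL k hk
    simp only [hRGdef, neg_neg] at this
    show -vb (k+2) = 2 * -vb (k+1) - -vb k + G (-vb (k+1))
    linarith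
  · intro k hk
    have := hge k hk
    simp only [hwbdef] at this
    show -vb k ≤ w k
    linarith

/-- Orbit companion above, for the smaller function. -/
theorem companion_up (G G' : ℝ → ℝ) (hG' : Continuous G') {C' : ℝ} (hC' : ∀ x, |G' x| ≤ C')
    (hle : ∀ x, G' x ≤ G x) (q : ℕ) (hq : 1 ≤ q) (a y : ℝ) :
    ∃ y' : ℝ, y ≤ y' ∧ ox G' a y' q = ox G a y q ∧ oy G' a y' q ≤ oy G a y q := by
  set w : ℕ → ℝ := fun k => ox G a y k with hwdef
  have hw : ∀ k, k+2 ≤ q → w (k+2) = 2*w (k+1) - w k + G (w (k+1)) := fun k _ => ox_el k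
  obtain ⟨v, hv0, hvq, hEL, hge⟩ := key G G' hG' hC' hle q w hw
  set y' : ℝ := v 1 - a - G' a with hy'def
  have hw0 : w 0 = a := ox_zero
  have hstep : ∀ k, k + 1 ≤ q → ox G' a y' k = v k ∧ ox G' a y' (k+1) = v (k+1) := by
    intro k
    induction k with
    | zero =>
      intro _
      refine ⟨by rw [ox_zero, hv0, hw0], ?_⟩
      rw [ox_one, hy'def]; ring
    | succ n ih =>
      intro h
      have hn := ih (by omega)
      refine ⟨hn.2, ?_⟩
      rw [ox_el n, hn.1, hn.2, ← hEL n (by omega)]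
  have hmatch : ∀ k, k ≤ q → ox G' a y' k = v k := by
    intro k hk
    rcases Nat.eq_zero_or_pos k with h0 | h0
    · subst h0; rw [ox_zero, hv0, hw0]
    · obtain ⟨n, rfl⟩ := Nat.exists_eq_add_of_le' h0
      exact (hstep n (by omega)).2
  have hw1 : w 1 = a + y + G a := ox_one
  refine ⟨y', ?_, ?_, ?_⟩
  · have h1 := hge 1 hq
    have h2 := hle a
    rw [hy'def]
    rw [hw1] at h1
    linarith
  · rw [hmatch q (le_refl q), hvq]
  · obtain ⟨n, rfl⟩ := Nat.exists_eq_add_of_le' hq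
    rw [oy_eq_diff (G := G') (a := a) (y := y') n, oy_eq_diff (G := G) (a := a) (y := y) n]
    have h1 : ox G' a y' (n+1) = w (n+1) := by
      rw [hmatch (n+1) (le_refl _), hvq]
    have h2 : w n ≤ ox G' a y' n := by rw [hmatch n (by omega)]; exact hge n (by omega)
    linarith

/-- Orbit companion below, for the larger function. -/
theorem companion_down (G G' : ℝ → ℝ) (hG : Continuous G) {C : ℝ} (hC : ∀ x, |G x| ≤ C)
    (hle : ∀ x, G' x ≤ G x) (q : ℕ) (hq : 1 ≤ q) (a y : ℝ) :
    ∃ y' : ℝ, y' ≤ y ∧ ox G a y' q = ox G' a y q ∧ oy G' a y q ≤ oy G a y' q := by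
  set w : ℕ → ℝ := fun k => ox G' a y k with hwdef
  have hw : ∀ k, k+2 ≤ q → w (k+2) = 2*w (k+1) - w k + G' (w (k+1)) := fun k _ => ox_el k
  obtain ⟨v, hv0, hvq, hEL, hge⟩ := key_down G G' hG hC hle q w hw
  set y' : ℝ := v 1 - a - G a with hy'def
  have hw0 : w 0 = a := ox_zero
  have hstep : ∀ k, k + 1 ≤ q → ox G a y' k = v k ∧ ox G a y' (k+1) = v (k+1) := by
    intro k
    induction k with
    | zero =>
      intro _
      refine ⟨by rw [ox_zero, hv0, hw0], ?_⟩
      rw [ox_one, hy'def]; ring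
    | succ n ih =>
      intro h
      have hn := ih (by omega)
      refine ⟨hn.2, ?_⟩
      rw [ox_el n, hn.1, hn.2, ← hEL n (by omega)]
  have hmatch : ∀ k, k ≤ q → ox G a y' k = v k := by
    intro k hk
    rcases Nat.eq_zero_or_pos k with h0 | h0
    · subst h0; rw [ox_zero, hv0, hw0]
    · obtain ⟨n, rfl⟩ := Nat.exists_eq_add_of_le' h0
      exact (hstep n (by omega)).2
  have hw1 : w 1 = a + y + G' a := ox_one
  refine ⟨y', ?_, ?_, ?_⟩
  · have h1 := hge 1 hq
    have h2 := hle a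
    rw [hy'def]
    rw [hw1] at h1
    linarith
  · rw [hmatch q (le_refl q), hvq]
  · obtain ⟨n, rfl⟩ := Nat.exists_eq_add_of_le' hq
    rw [oy_eq_diff (G := G') (a := a) (y := y) n, oy_eq_diff (G := G) (a := a) (y := y') n]
    have h1 : ox G a y' (n+1) = w (n+1) := by
      rw [hmatch (n+1) (le_refl _), hvq]
    have h2 : ox G a y' n ≤ w n := by rw [hmatch n (by omega)]; exact hge n (by omega)
    linarith

end
end S12


namespace S12
noncomputable section

theorem bound_of_periodic (G : ℝ → ℝ) (hc : Continuous G)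
    (hper : ∀ (n : ℤ) (x : ℝ), G (x + n) = G x) : ∃ C, ∀ x, |G x| ≤ C := by
  obtain ⟨C, hC⟩ :=
    (isCompact_Icc (a := (0:ℝ)) (b := 1)).exists_bound_of_continuousOn hc.continuousOn
  refine ⟨C, fun x => ?_⟩
  have h1 : G x = G (Int.fract x) := by
    conv_lhs => rw [← Int.fract_add_floor x]
    exact hper ⌊x⌋ (Int.fract x)
  rw [h1]
  have := hC (Int.fract x) ⟨Int.fract_nonneg x, (Int.fract_lt_one x).le⟩
  simpa using this

theorem Afib_facts (G : ℝ → ℝ) (hG : Continuous G) {C : ℝ} (hC : ∀ x, |G x| ≤ C)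
    (s : ℤ) {q : ℕ} (hq : 1 ≤ q) (a : ℝ) :
    IsCompact {y : ℝ | ox G a y q = a + (s:ℝ)} ∧ {y : ℝ | ox G a y q = a + (s:ℝ)}.Nonempty := by
  have hC0 : 0 ≤ C := le_trans (abs_nonneg _) (hC 0)
  have hcont : Continuous (fun y => ox G a y q) := continuous_ox hG a q
  have hclosed : IsClosed {y : ℝ | ox G a y q = a + (s:ℝ)} :=
    isClosed_eq hcont continuous_const
  have hq1 : (1:ℝ) ≤ (q:ℝ) := by exact_mod_cast hq
  obtain ⟨R, hRdef⟩ : ∃ R : ℝ, R = |(s:ℝ)| + ((q*q : ℕ):ℝ) * C + 1 := ⟨_, rfl⟩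
  have hR0 : 0 ≤ R := by rw [hRdef]; positivity
  have hbnd : ∀ y : ℝ, |ox G a y q - a - q * y| ≤ (q*q : ℕ) * C := by
    intro y
    have := ox_bound (G := G) (a := a) (y := y) hC q
    exact_mod_cast this
  constructor
  · apply IsCompact.of_isClosed_subset (isCompact_Icc (a := -R) (b := R)) hclosed
    intro y hy
    have hb := hbnd y
    rw [Set.mem_setOf_eq.mp hy] at hb
    have hb' : |(s:ℝ) - q * y| ≤ (q*q : ℕ) * C := by
      have : a + (s:ℝ) - a - q * y = (s:ℝ) - q*y := by ring
      rwa [this] at hb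
    have h2 : |(q:ℝ) * y| ≤ |(s:ℝ)| + (q*q:ℕ) * C := by
      have := abs_sub_abs_le_abs_sub ((q:ℝ)*y) (s:ℝ)
      have h3 : |(q:ℝ)*y - s| = |(s:ℝ) - q*y| := abs_sub_comm _ _
      linarith [abs_nonneg ((q:ℝ)*y - s)]
    have h4 : |y| ≤ |(q:ℝ) * y| := by
      rw [abs_mul, Nat.abs_cast]
      nlinarith [abs_nonneg y]
    have h5 : |y| ≤ R := by rw [hRdef]; linarith
    exact abs_le.mp h5
  · have h4 : ((q*q : ℕ):ℝ) * C = (q:ℝ)*(q:ℝ)*C := by push_cast; ring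
    have h5 : R = |(s:ℝ)| + (q:ℝ)*(q:ℝ)*C + 1 := by rw [hRdef]; push_cast; ring
    have h2 : R ≤ (q:ℝ) * R := by nlinarith
    have hup : a + (s:ℝ) ≤ ox G a R q := by
      have hb := hbnd R
      have h1 := (abs_le.mp hb).1
      rw [h4] at h1
      have h3 : (s:ℝ) ≤ |(s:ℝ)| := le_abs_self _
      linarith
    have hdown : ox G a (-R) q ≤ a + (s:ℝ) := by
      have hb := hbnd (-R)
      have h1 := (abs_le.mp hb).2
      rw [h4] at h1
      have h3 : -(s:ℝ) ≤ |(s:ℝ)| := neg_le_abs _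
      have h6 : (q:ℝ) * -R = -((q:ℝ)*R) := by ring
      rw [h6] at h1
      linarith
    have := intermediate_value_Icc (by linarith : -R ≤ R) hcont.continuousOn
    obtain ⟨y, _, hy⟩ := this ⟨hdown, hup⟩
    exact ⟨y, hy⟩

theorem coe_eq_coe' (a b : ℝ) (h : (a : AddCircle (1:ℝ)) = b) : ∃ n : ℤ, a = b + n := by
  rw [QuotientAddGroup.eq_iff_sub_mem, AddSubgroup.mem_zmultiples_iff] at h
  obtain ⟨k, hk⟩ := h
  simp only [zsmul_eq_mul, mul_one] at hk
  exact ⟨k, by linarith⟩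

theorem coe_rep (x : AddCircle (1:ℝ)) : ((rep x : ℝ) : AddCircle (1:ℝ)) = x :=
  (AddCircle.equivIco 1 0).symm_apply_apply x

theorem lift_eq (a : ℝ) (x : AddCircle (1:ℝ)) (h : (a : AddCircle (1:ℝ)) = x) :
    ∃ n : ℤ, a = rep x + n := by
  apply coe_eq_coe'
  rw [h, coe_rep]

theorem coe_add_int (s : ℤ) (a : ℝ) :
    ((a + (s:ℝ) : ℝ) : AddCircle (1:ℝ)) = (a : AddCircle (1:ℝ)) := by
  rw [QuotientAddGroup.eq_iff_sub_mem]
  simpa using AddSubgroup.zsmul_mem_zmultiples (1:ℝ) s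

theorem fiber_K (G : ℝ → ℝ) (hGper : ∀ (n : ℤ) (x : ℝ), G (x + n) = G x) (s : ℤ) (q : ℕ)
    (x : AddCircle (1:ℝ)) :
    {y : ℝ | (x, y) ∈ Kset G s q} = {y : ℝ | ox G (rep x) y q = rep x + (s:ℝ)} := by
  ext y
  simp only [Set.mem_setOf_eq, Kset, Set.mem_image]
  constructor
  · rintro ⟨Z, hZ, hP⟩
    have h1 : (Z.1 : AddCircle (1:ℝ)) = x := congrArg Prod.fst hP
    have h2 : Z.2 = y := congrArg Prod.snd hP
    obtain ⟨n, hn⟩ := lift_eq Z.1 x h1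
    have hZ' : ox G Z.1 Z.2 q = Z.1 + (s:ℝ) := hZ
    rw [hn, h2] at hZ'
    rw [(ox_translate hGper n q).1] at hZ'
    linarith
  · intro h
    exact ⟨(rep x, y), h, by simp [projCyl, coe_rep]⟩

theorem fiber_img (G : ℝ → ℝ) (hGper : ∀ (n : ℤ) (x : ℝ), G (x + n) = G x) (s : ℤ) (q : ℕ)
    (x : AddCircle (1:ℝ)) :
    {y' : ℝ | (x, y') ∈ (inducedMap G)^[q] '' Kset G s q}
      = (fun y => oy G (rep x) y q) '' {y : ℝ | ox G (rep x) y q = rep x + (s:ℝ)} := by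
  have hGrep : ∀ t : ℝ, G (rep ((t : ℝ) : AddCircle (1:ℝ))) = G t := by
    intro t
    obtain ⟨n, hn⟩ := lift_eq (rep ((t:ℝ) : AddCircle (1:ℝ))) ((t:ℝ) : AddCircle (1:ℝ))
      (coe_rep _)
    obtain ⟨m, hm⟩ := coe_eq_coe' (rep ((t:ℝ) : AddCircle (1:ℝ))) t (coe_rep _)
    rw [hm, hGper]
  have hsc : ∀ Z : ℝ × ℝ, projCyl (liftMap G Z) = inducedMap G (projCyl Z) := by
    intro Z
    show ((((Z.1 + Z.2 + G Z.1 : ℝ) : AddCircle (1:ℝ))), Z.2 + G Z.1)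
      = (((Z.1 : AddCircle (1:ℝ)) + (((Z.2 + G (rep ((Z.1 : ℝ) : AddCircle (1:ℝ))) : ℝ)
          : AddCircle (1:ℝ)))), Z.2 + G (rep ((Z.1 : ℝ) : AddCircle (1:ℝ))))
    rw [hGrep Z.1]
    refine Prod.ext ?_ rfl
    show ((Z.1 + Z.2 + G Z.1 : ℝ) : AddCircle (1:ℝ))
      = (Z.1 : AddCircle (1:ℝ)) + ((Z.2 + G Z.1 : ℝ) : AddCircle (1:ℝ))
    rw [show Z.1 + Z.2 + G Z.1 = Z.1 + (Z.2 + G Z.1) from by ring]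
    norm_cast
  have hit : ∀ Z : ℝ × ℝ, (inducedMap G)^[q] (projCyl Z) = projCyl ((liftMap G)^[q] Z) :=
    fun Z => ((Function.Semiconj.iterate_right hsc q) Z).symm
  ext y'
  simp only [Set.mem_setOf_eq, Set.mem_image]
  constructor
  · rintro ⟨z, hz, himg⟩
    obtain ⟨Z, hZ, rfl⟩ := hz
    rw [hit Z] at himg
    have h1 : ((ox G Z.1 Z.2 q : ℝ) : AddCircle (1:ℝ)) = x := congrArg Prod.fst himg
    have h2 : oy G Z.1 Z.2 q = y' := congrArg Prod.snd himg
    have hZ' : ox G Z.1 Z.2 q = Z.1 + (s:ℝ) := hZ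
    rw [hZ'] at h1
    rw [coe_add_int s Z.1] at h1
    obtain ⟨n, hn⟩ := lift_eq Z.1 x h1
    refine ⟨Z.2, ?_, ?_⟩
    · rw [hn] at hZ'
      rw [(ox_translate hGper n q).1] at hZ'
      linarith
    · rw [← h2, hn]
      exact ((ox_translate hGper n q).2).symm
  · rintro ⟨y, hy, rfl⟩
    refine ⟨projCyl (rep x, y), ⟨(rep x, y), hy, rfl⟩, ?_⟩
    rw [hit (rep x, y)]
    show ((((ox G (rep x) y q : ℝ) : AddCircle (1:ℝ))), oy G (rep x) y q) = (x, oy G (rep x) y q)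
    rw [Set.mem_setOf_eq.mp hy, coe_add_int, coe_rep]

theorem transfer (G₁ G₂ : ℝ → ℝ) (h₁c : Continuous G₁) (h₂c : Continuous G₂)
    (h₁per : ∀ (n : ℤ) (x : ℝ), G₁ (x + n) = G₁ x)
    (h₂per : ∀ (n : ℤ) (x : ℝ), G₂ (x + n) = G₂ x)
    (hle : ∀ x, G₁ x ≤ G₂ x) (s p : ℤ) (q : ℕ) (hq : 1 ≤ q) :
    (IsPositiveTriplet G₁ s p q → IsPositiveTriplet G₂ s p q) ∧
    (IsNegativeTriplet G₂ s p q → IsNegativeTriplet G₁ s p q) := by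
  obtain ⟨C₁, hC₁⟩ := bound_of_periodic G₁ h₁c h₁per
  obtain ⟨C₂, hC₂⟩ := bound_of_periodic G₂ h₂c h₂per
  have main : ∀ x : AddCircle (1:ℝ),
      muPlus G₂ s q x ≤ muPlus G₁ s q x ∧ nuMinus G₁ s q x ≤ nuMinus G₂ s q x ∧
      muMinus G₂ s q x ≤ muMinus G₁ s q x ∧ nuPlus G₁ s q x ≤ nuPlus G₂ s q x := by
    intro x
    set a : ℝ := rep x with hadef
    set A₁ : Set ℝ := {y : ℝ | ox G₁ a y q = a + (s:ℝ)} with hA₁def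
    set A₂ : Set ℝ := {y : ℝ | ox G₂ a y q = a + (s:ℝ)} with hA₂def
    obtain ⟨hA₁c, hA₁ne⟩ := Afib_facts G₁ h₁c hC₁ s hq a
    obtain ⟨hA₂c, hA₂ne⟩ := Afib_facts G₂ h₂c hC₂ s hq a
    set B₁ : Set ℝ := (fun y => oy G₁ a y q) '' A₁ with hB₁def
    set B₂ : Set ℝ := (fun y => oy G₂ a y q) '' A₂ with hB₂def
    have hB₁c : IsCompact B₁ := hA₁c.image (continuous_oy h₁c a q)
    have hB₂c : IsCompact B₂ := hA₂c.image (continuous_oy h₂c a q)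
    have hB₁ne : B₁.Nonempty := hA₁ne.image _
    have hB₂ne : B₂.Nonempty := hA₂ne.image _
    have hmu : muPlus G₂ s q x = sSup A₂ := by
      unfold muPlus; rw [fiber_K G₂ h₂per s q x]
    have hmu1 : muPlus G₁ s q x = sSup A₁ := by
      unfold muPlus; rw [fiber_K G₁ h₁per s q x]
    have hmm : muMinus G₂ s q x = sInf A₂ := by
      unfold muMinus; rw [fiber_K G₂ h₂per s q x]
    have hmm1 : muMinus G₁ s q x = sInf A₁ := by
      unfold muMinus; rw [fiber_K G₁ h₁per s q x]
    have hnu : nuMinus G₂ s q x = sInf B₂ := by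
      unfold nuMinus; rw [fiber_img G₂ h₂per s q x]
    have hnu1 : nuMinus G₁ s q x = sInf B₁ := by
      unfold nuMinus; rw [fiber_img G₁ h₁per s q x]
    have hnp : nuPlus G₂ s q x = sSup B₂ := by
      unfold nuPlus; rw [fiber_img G₂ h₂per s q x]
    have hnp1 : nuPlus G₁ s q x = sSup B₁ := by
      unfold nuPlus; rw [fiber_img G₁ h₁per s q x]
    refine ⟨?_, ?_, ?_, ?_⟩
    · -- muPlus G₂ ≤ muPlus G₁
      rw [hmu, hmu1]
      have hyA₂ : sSup A₂ ∈ A₂ := hA₂c.sSup_mem hA₂ne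
      obtain ⟨y', h1, h2, _⟩ := companion_up G₂ G₁ h₁c hC₁ hle q hq a (sSup A₂)
      have hy' : y' ∈ A₁ := by
        show ox G₁ a y' q = a + (s:ℝ)
        rw [h2]; exact hyA₂
      exact le_trans h1 (le_csSup hA₁c.bddAbove hy')
    · -- nuMinus G₁ ≤ nuMinus G₂
      rw [hnu, hnu1]
      have hB : sInf B₂ ∈ B₂ := hB₂c.sInf_mem hB₂ne
      obtain ⟨y₀, hy₀, hoy⟩ := hB
      obtain ⟨y', h1, h2, h3⟩ := companion_up G₂ G₁ h₁c hC₁ hle q hq a y₀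
      have hy' : y' ∈ A₁ := by
        show ox G₁ a y' q = a + (s:ℝ)
        rw [h2]; exact hy₀
      calc sInf B₁ ≤ oy G₁ a y' q := csInf_le hB₁c.bddBelow ⟨y', hy', rfl⟩
        _ ≤ oy G₂ a y₀ q := h3
        _ = sInf B₂ := hoy
    · -- muMinus G₂ ≤ muMinus G₁
      rw [hmm, hmm1]
      have hyA₁ : sInf A₁ ∈ A₁ := hA₁c.sInf_mem hA₁ne
      obtain ⟨y', h1, h2, _⟩ := companion_down G₂ G₁ h₂c hC₂ hle q hq a (sInf A₁)
      have hy' : y' ∈ A₂ := by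
        show ox G₂ a y' q = a + (s:ℝ)
        rw [h2]; exact hyA₁
      exact le_trans (csInf_le hA₂c.bddBelow hy') h1
    · -- nuPlus G₁ ≤ nuPlus G₂
      rw [hnp, hnp1]
      have hB : sSup B₁ ∈ B₁ := hB₁c.sSup_mem hB₁ne
      obtain ⟨y₀, hy₀, hoy⟩ := hB
      obtain ⟨y', h1, h2, h3⟩ := companion_down G₂ G₁ h₂c hC₂ hle q hq a y₀
      have hy' : y' ∈ A₂ := by
        show ox G₂ a y' q = a + (s:ℝ)
        rw [h2]; exact hy₀
      calc sSup B₁ = oy G₁ a y₀ q := hoy.symm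
        _ ≤ oy G₂ a y' q := h3
        _ ≤ sSup B₂ := le_csSup hB₂c.bddAbove ⟨y', hy', rfl⟩
  constructor
  · intro hpos x
    have h := main x
    have h0 := hpos x
    have : nuMinus G₁ s q x - muPlus G₁ s q x ≤ nuMinus G₂ s q x - muPlus G₂ s q x := by
      linarith [h.1, h.2.1]
    linarith
  · intro hneg x
    have h := main x
    have h0 := hneg x
    have : nuPlus G₁ s q x - muMinus G₁ s q x ≤ nuPlus G₂ s q x - muMinus G₂ s q x := by
      linarith [h.2.2.1, h.2.2.2]
    linarith

end
end S12

/-- if T̃₁ ≤ T̃₂ then positive triplets of T̃₁ are positive for T̃₂ and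
negative triplets of T̃₂ are negative for T̃₁. -/

theorem stmt12 (g₁ g₂ : ℝ → ℝ)
    (hLip₁ : ∃ K, LipschitzWith K g₁) (hLip₂ : ∃ K, LipschitzWith K g₂)
    (hper₁ : ∀ x, g₁ (x + 1) = g₁ x) (hper₂ : ∀ x, g₂ (x + 1) = g₂ x)
    (hint₁ : ∫ x in (0:ℝ)..1, g₁ x = 0) (hint₂ : ∫ x in (0:ℝ)..1, g₂ x = 0)
    (lam₁ lam₂ : ℝ) (hle : ∀ x, g₁ x + lam₁ ≤ g₂ x + lam₂)
    (s p : ℤ) (q : ℕ) (hq : 1 ≤ q) :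
    (IsPositiveTriplet (fun x => g₁ x + lam₁) s p q →
      IsPositiveTriplet (fun x => g₂ x + lam₂) s p q) ∧
    (IsNegativeTriplet (fun x => g₂ x + lam₂) s p q →
      IsNegativeTriplet (fun x => g₁ x + lam₁) s p q) := by
  obtain ⟨K₁, hK₁⟩ := hLip₁
  obtain ⟨K₂, hK₂⟩ := hLip₂
  have h₁c : Continuous (fun x => g₁ x + lam₁) := hK₁.continuous.add continuous_const
  have h₂c : Continuous (fun x => g₂ x + lam₂) := hK₂.continuous.add continuous_const
  have h₁per : ∀ (n : ℤ) (x : ℝ), (fun x => g₁ x + lam₁) (x + (n:ℝ)) = (fun x => g₁ x + lam₁) x := by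
    have hp : Function.Periodic g₁ 1 := hper₁
    intro n x
    simp only
    rw [show g₁ (x + (n:ℝ)) = g₁ x by simpa using (hp.int_mul n) x]
  have h₂per : ∀ (n : ℤ) (x : ℝ), (fun x => g₂ x + lam₂) (x + (n:ℝ)) = (fun x => g₂ x + lam₂) x := by
    have hp : Function.Periodic g₂ 1 := hper₂
    intro n x
    simp only
    rw [show g₂ (x + (n:ℝ)) = g₂ x by simpa using (hp.int_mul n) x]
  exact S12.transfer _ _ h₁c h₂c h₁per h₂per hle s p q hq

end
end

section
/- Let g̃:ℝ→ℝ be continuous, not identically zero, with g̃(x+1)=g̃(x) for all x and ∫₀¹ g̃(x)dx=0, and let x₀ be a point where g̃ attains its maximum (so g̃(x₀)>0). Then for every λ ≥ λ* := 1/g̃(x₀), the cylinder map Ŝ_λ has no rotational invariant curve. -/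
open Filter Topology

noncomputable section

section AuxiliaryLemmas

open Set Real


/-- an integer-periodic evaluation lemma -/
lemma per_int {F : ℝ → ℝ} (hp : Function.Periodic F 1) (x : ℝ) (k : ℤ) :
    F (x + k) = F x := by
  have h := hp.sub_int_mul_eq (x := x + k) k
  simpa using h.symm

/-- continuous 1-periodic functions are bounded -/
lemma bounded_of_periodic {F : ℝ → ℝ} (hc : Continuous F) (hp : Function.Periodic F 1) :
    ∃ C : ℝ, 0 ≤ C ∧ ∀ x, |F x| ≤ C := by
  obtain ⟨C, hC⟩ := (isCompact_Icc (a := (0:ℝ)) (b := 1)).exists_bound_of_continuousOn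
    hc.continuousOn
  refine ⟨max C 0, le_max_right _ _, fun x => ?_⟩
  have h1 : F x = F (Int.fract x) := by
    have h := hp.sub_int_mul_eq (x := x) ⌊x⌋
    rw [mul_one] at h
    rw [← h]; rfl
  rw [h1]
  have h2 : Int.fract x ∈ Set.Icc (0:ℝ) 1 :=
    ⟨Int.fract_nonneg x, (Int.fract_lt_one x).le⟩
  calc |F (Int.fract x)| = ‖F (Int.fract x)‖ := rfl
    _ ≤ C := hC _ h2
    _ ≤ max C 0 := le_max_left _ _

/-- positivity of the integral of a nonneg continuous function positive somewhere in [0,1) -/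
lemma integral_pos_of_pos_at {f : ℝ → ℝ} (hf : Continuous f)
    (h0 : ∀ x, 0 ≤ f x) {x₀ : ℝ} (hx₀ : x₀ ∈ Set.Ico (0:ℝ) 1) (hpos : 0 < f x₀) :
    0 < ∫ x in (0:ℝ)..1, f x := by
  obtain ⟨δ, hδ, hball⟩ := Metric.continuousAt_iff.1 hf.continuousAt (f x₀ / 2) (by linarith)
  set l : ℝ := max 0 (x₀ - δ/2) with hl
  set r : ℝ := min 1 (x₀ + δ/2) with hr
  have hl0 : 0 ≤ l := le_max_left _ _
  have hlx : l ≤ x₀ := max_le hx₀.1 (by linarith)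
  have hxr : x₀ < r := lt_min hx₀.2 (by linarith)
  have hr1 : r ≤ 1 := min_le_left _ _
  have hlr : l < r := lt_of_le_of_lt hlx hxr
  have key : ∀ x ∈ Set.Icc l r, f x₀ / 2 ≤ f x := by
    intro x hx
    have hd : dist x x₀ < δ := by
      rw [Real.dist_eq, abs_lt]
      constructor
      · have : x₀ - δ/2 ≤ l := le_max_right _ _
        have := hx.1; nlinarith
      · have : r ≤ x₀ + δ/2 := min_le_right _ _
        have := hx.2; nlinarith
    have := hball hd
    rw [Real.dist_eq, abs_lt] at this
    linarith [this.1]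
  have hint : ∀ p q : ℝ, IntervalIntegrable f MeasureTheory.volume p q :=
    fun p q => hf.intervalIntegrable p q
  have hmid : f x₀ / 2 * (r - l) ≤ ∫ x in l..r, f x := by
    have := intervalIntegral.integral_mono_on hlr.le (intervalIntegrable_const) (hint l r) key
    have h2 : (r - l) * f x₀ / 2 = f x₀ / 2 * (r - l) := by ring
    rw [← h2]
    simpa using this
  have h01 : (∫ x in (0:ℝ)..1, f x) =
      (∫ x in (0:ℝ)..l, f x) + (∫ x in l..r, f x) + (∫ x in r..(1:ℝ), f x) := by
    rw [intervalIntegral.integral_add_adjacent_intervals (hint 0 l) (hint l r),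
      intervalIntegral.integral_add_adjacent_intervals (hint 0 r) (hint r 1)]
  have i1 : 0 ≤ ∫ x in (0:ℝ)..l, f x :=
    intervalIntegral.integral_nonneg hl0 (fun u _ => h0 u)
  have i3 : 0 ≤ ∫ x in r..(1:ℝ), f x :=
    intervalIntegral.integral_nonneg hr1 (fun u _ => h0 u)
  have : 0 < f x₀ / 2 * (r - l) := by nlinarith
  linarith



/-- If a continuous real function h on [-T,T] has sin(h) < 0 throughout, cos(h T) > 0 and
cos(h(-T)) < 0, then h T - h (-T) ∈ (0, π). -/
lemma pin {T : ℝ} (hT : 0 < T) {h : ℝ → ℝ} (hc : ContinuousOn h (Set.Icc (-T) T))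
    (hs : ∀ t ∈ Set.Icc (-T) T, Real.sin (h t) < 0)
    (hct : 0 < Real.cos (h T)) (hcm : Real.cos (h (-T)) < 0) :
    0 < h T - h (-T) ∧ h T - h (-T) < π := by
  have hmT : (-T) ∈ Set.Icc (-T) T := ⟨le_refl _, by linarith⟩
  have hTT : T ∈ Set.Icc (-T) T := ⟨by linarith, le_refl _⟩
  have hπ := Real.pi_pos
  -- h t is never an integer multiple of π
  have hni : ∀ t ∈ Set.Icc (-T) T, ∀ m : ℤ, h t ≠ m * π := by
    intro t ht m hEq
    have : Real.sin (h t) = 0 := by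
      rw [Real.sin_eq_zero_iff]; exact ⟨m, hEq.symm⟩
    exact absurd this (ne_of_lt (hs t ht))
  -- φ := h / π never takes integer values
  set φ : ℝ → ℝ := fun t => h t / π with hφ
  have hφc : ContinuousOn φ (Set.Icc (-T) T) := hc.div_const _
  have hφni : ∀ t ∈ Set.Icc (-T) T, ∀ m : ℤ, φ t ≠ m := by
    intro t ht m hEq
    refine hni t ht m ?_
    have : h t = m * π := by
      have hEq' : h t / π = m := hEq
      rw [div_eq_iff (ne_of_gt hπ)] at hEq'
      linarith [hEq']
    exact this
  -- the floor of φ is constant on the interval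
  set k : ℤ := ⌊φ (-T)⌋ with hk
  have hfloor : ∀ t ∈ Set.Icc (-T) T, (k : ℝ) < φ t ∧ φ t < k + 1 := by
    intro t ht
    have huIcc : Set.uIcc (-T) t ⊆ Set.Icc (-T) T := by
      rw [show Set.Icc (-T) T = Set.uIcc (-T) T from (Set.uIcc_of_le (by linarith)).symm]
      exact Set.uIcc_subset_uIcc Set.left_mem_uIcc
        (by rw [Set.uIcc_of_le (by linarith)]; exact ht)
    have hIVT := intermediate_value_uIcc (hφc.mono huIcc)
    have hkφ : (k : ℝ) < φ (-T) := by
      rcases lt_or_eq_of_le (Int.floor_le (φ (-T))) with h' | h'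
      · exact h'
      · exact absurd h'.symm (hφni _ hmT k)
    have hφk1 : φ (-T) < k + 1 := Int.lt_floor_add_one _
    constructor
    · by_contra hcon
      push_neg at hcon
      have hlt : φ t < k := lt_of_le_of_ne hcon (hφni t ht k)
      have : (k : ℝ) ∈ Set.uIcc (φ (-T)) (φ t) := by
        rw [Set.mem_uIcc]; right; exact ⟨hlt.le, hkφ.le⟩
      obtain ⟨τ, hτ, hτEq⟩ := hIVT this
      exact hφni τ (huIcc hτ) k hτEq
    · by_contra hcon
      push_neg at hcon
      have hlt : (k : ℝ) + 1 < φ t := lt_of_le_of_ne hcon (by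
        intro hEq
        exact hφni t ht (k+1) (by push_cast; rw [← hEq]))
      have : ((k : ℝ) + 1) ∈ Set.uIcc (φ (-T)) (φ t) := by
        rw [Set.mem_uIcc]; left; exact ⟨hφk1.le, hlt.le⟩
      obtain ⟨τ, hτ, hτEq⟩ := hIVT this
      exact hφni τ (huIcc hτ) (k+1) (by push_cast; rw [hτEq])
  -- so h t ∈ (kπ, (k+1)π) throughout
  have hrange : ∀ t ∈ Set.Icc (-T) T, (k : ℝ) * π < h t ∧ h t < ((k : ℝ) + 1) * π := by
    intro t ht
    obtain ⟨h1', h2'⟩ := hfloor t ht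
    have e1 : (k : ℝ) * π < h t := by
      have := (lt_div_iff₀ hπ).1 h1'
      linarith [this]
    have e2 : h t < ((k:ℝ) + 1) * π := by
      have := (div_lt_iff₀ hπ).1 h2'
      linarith [this]
    exact ⟨e1, e2⟩
  -- k is odd
  have hodd : Odd k := by
    rcases Int.even_or_odd k with he | ho
    · exfalso
      obtain ⟨h1', h2'⟩ := hrange (-T) hmT
      have hx1 : 0 < h (-T) - k * π := by linarith
      have hx2 : h (-T) - k * π < π := by linarith
      have hsin := Real.sin_add_int_mul_pi (h (-T) - k * π) k
      rw [show h (-T) - (k:ℝ)*π + (k:ℝ)*π = h (-T) by ring] at hsin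
      rw [he.neg_one_zpow, one_mul] at hsin
      have hpos : 0 < Real.sin (h (-T) - k * π) := Real.sin_pos_of_pos_of_lt_pi hx1 hx2
      have hneg := hs (-T) hmT
      rw [hsin] at hneg
      linarith
    · exact ho
  obtain ⟨m, hm⟩ := hodd
  have hkc : (k : ℝ) = 2*(m:ℝ)+1 := by exact_mod_cast congrArg (fun z : ℤ => (z : ℝ)) hm
  -- shift by (m+1)(2π)
  have hβ : ∀ t ∈ Set.Icc (-T) T,
      -π < h t - ((m:ℝ)+1)*(2*π) ∧ h t - ((m:ℝ)+1)*(2*π) < 0 := by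
    intro t ht
    obtain ⟨h1', h2'⟩ := hrange t ht
    constructor <;> nlinarith
  have hcosEq : ∀ t : ℝ, Real.cos (h t - ((m:ℝ)+1)*(2*π)) = Real.cos (h t) := by
    intro t
    have := Real.cos_add_int_mul_two_pi (h t - ((m:ℝ)+1)*(2*π)) (m+1)
    rw [show h t - ((m:ℝ)+1)*(2*π) + ((m+1 : ℤ):ℝ)*(2*π) = h t by push_cast; ring] at this
    exact this.symm
  obtain ⟨hbT1, hbT2⟩ := hβ T hTT
  obtain ⟨hbm1, hbm2⟩ := hβ (-T) hmT
  have h1 : -(π/2) < h T - ((m:ℝ)+1)*(2*π) := by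
    by_contra hcon
    push_neg at hcon
    have hle : Real.cos (h T - ((m:ℝ)+1)*(2*π)) ≤ 0 := by
      rw [← Real.cos_neg]
      exact Real.cos_nonpos_of_pi_div_two_le_of_le (by linarith) (by linarith)
    rw [hcosEq] at hle
    linarith
  have h2 : h (-T) - ((m:ℝ)+1)*(2*π) ≤ -(π/2) := by
    by_contra hcon
    push_neg at hcon
    have hgt : 0 < Real.cos (h (-T) - ((m:ℝ)+1)*(2*π)) :=
      Real.cos_pos_of_mem_Ioo ⟨by linarith, by linarith⟩
    rw [hcosEq] at hgt
    linarith
  constructor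
  · linarith
  · linarith

section CrossingDef

/-- the nonvanishing "difference" function -/
private def fC (u v a b : ℝ → ℝ) (s t : ℝ) : ℂ :=
  ((u t - a s : ℝ) : ℂ) + ((v t - b s : ℝ) : ℂ) * Complex.I

lemma fC_re (u v a b : ℝ → ℝ) (s t : ℝ) : (fC u v a b s t).re = u t - a s := by
  simp [fC]

lemma fC_im (u v a b : ℝ → ℝ) (s t : ℝ) : (fC u v a b s t).im = v t - b s := by
  simp [fC]

lemma fC_cont (u v a b : ℝ → ℝ) (hu : Continuous u) (hv : Continuous v) (ha : Continuous a)
    (hb : Continuous b) : Continuous (fun p : ℝ × ℝ => fC u v a b p.1 p.2) := by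
  apply Continuous.add
  · exact Complex.continuous_ofReal.comp ((hu.comp continuous_snd).sub (ha.comp continuous_fst))
  · exact (Complex.continuous_ofReal.comp
      ((hv.comp continuous_snd).sub (hb.comp continuous_fst))).mul continuous_const

end CrossingDef

set_option maxHeartbeats 1000000 in
/-- Core crossing lemma, abstract complex-valued version. -/
lemma crossing_core (f : ℝ → ℝ → ℂ) (hfc : Continuous fun p : ℝ × ℝ => f p.1 p.2)
    {T : ℝ} (hT : 0 < T)
    (hT1 : ∀ s ∈ Set.Icc (0:ℝ) 1, 0 < (f s T).re)
    (hT2 : ∀ s ∈ Set.Icc (0:ℝ) 1, (f s (-T)).re < 0)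
    (h0 : ∀ t ∈ Set.Icc (-T) T, (f 0 t).im < 0)
    (h1 : ∀ t ∈ Set.Icc (-T) T, 0 < (f 1 t).im)
    (hne : ∀ s ∈ Set.Icc (0:ℝ) 1, ∀ t ∈ Set.Icc (-T) T, f s t ≠ 0) :
    False := by
  classical
  obtain ⟨R, hR⟩ : ∃ R : Set (ℝ × ℝ), R = (Set.Icc (0:ℝ) 1) ×ˢ (Set.Icc (-T) T) := ⟨_, rfl⟩
  have hmemR : ∀ s t : ℝ, s ∈ Set.Icc (0:ℝ) 1 → t ∈ Set.Icc (-T) T → (s, t) ∈ R := by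
    intro s t hs ht; rw [hR]; exact ⟨hs, ht⟩
  have hmemR' : ∀ p : ℝ × ℝ, p ∈ R → p.1 ∈ Set.Icc (0:ℝ) 1 ∧ p.2 ∈ Set.Icc (-T) T := by
    intro p hp; rw [hR] at hp; exact ⟨hp.1, hp.2⟩
  have hRc : IsCompact R := by rw [hR]; exact isCompact_Icc.prod isCompact_Icc
  have hRne : R.Nonempty := by
    refine ⟨(0, 0), hmemR 0 0 ⟨le_refl _, zero_le_one⟩ ⟨by linarith, hT.le⟩⟩
  have hR0 : ∀ p ∈ R, f p.1 p.2 ≠ 0 := fun p hp =>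
    hne p.1 (hmemR' p hp).1 p.2 (hmemR' p hp).2
  -- minimum modulus
  obtain ⟨p₀, hp₀R, hp₀min⟩ := hRc.exists_isMinOn hRne
    ((continuous_norm.comp hfc).continuousOn)
  obtain ⟨ρ, hρdef⟩ : ∃ ρ : ℝ, ρ = ‖f p₀.1 p₀.2‖ := ⟨_, rfl⟩
  have hρ : 0 < ρ := by rw [hρdef]; exact norm_pos_iff.2 (hR0 p₀ hp₀R)
  have hρle : ∀ p ∈ R, ρ ≤ ‖f p.1 p.2‖ := by
    intro p hp
    rw [hρdef]
    exact hp₀min hp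
  -- uniform continuity
  have huc := hRc.uniformContinuousOn_of_continuous hfc.continuousOn
  obtain ⟨δ, hδ, hδc⟩ := (Metric.uniformContinuousOn_iff).1 huc ρ hρ
  -- subdivision step
  obtain ⟨n, hstep, hnpos, hsdef, hh0, hhδ, hsum⟩ :
      ∃ (n : ℕ) (hstep : ℝ), 0 < (n:ℝ) ∧ hstep = 2*T/n ∧ 0 ≤ hstep ∧ hstep < δ ∧
        -T + (n:ℝ) * hstep = T := by
    refine ⟨⌈2*T/δ⌉₊ + 1, 2*T/(⌈2*T/δ⌉₊ + 1 : ℕ), by positivity, by push_cast; ring, ?_, ?_, ?_⟩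
    · positivity
    · rw [div_lt_iff₀ (by positivity)]
      have h2T : 2*T/δ ≤ (⌈2*T/δ⌉₊ : ℝ) := Nat.le_ceil _
      have h3 : 2*T/δ * δ ≤ (⌈2*T/δ⌉₊ : ℝ) * δ := by nlinarith
      rw [div_mul_cancel₀ _ (ne_of_gt hδ)] at h3
      push_cast
      nlinarith
    · have hne0 : ((⌈2*T/δ⌉₊ + 1 : ℕ) : ℝ) ≠ 0 := by positivity
      field_simp
      ring
  obtain ⟨c, hcdef⟩ : ∃ c : ℕ → ℝ → ℝ, c = fun (i : ℕ) (t : ℝ) => min t (-T + (i:ℝ) * hstep) := ⟨_, rfl⟩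
  have hc0 : ∀ t ∈ Set.Icc (-T) T, c 0 t = -T := by
    intro t ht; rw [hcdef]; simp; exact ht.1
  have hcn : ∀ t ∈ Set.Icc (-T) T, c n t = t := by
    intro t ht
    rw [hcdef]
    simp only [hsum]
    exact min_eq_left ht.2
  have hcmem : ∀ i, ∀ t ∈ Set.Icc (-T) T, c i t ∈ Set.Icc (-T) T := by
    intro i t ht
    rw [hcdef]
    constructor
    · apply le_min ht.1
      have : (0:ℝ) ≤ (i:ℝ) * hstep := by positivity
      linarith
    · exact le_trans (min_le_left _ _) ht.2
  have hcstep : ∀ i, ∀ t : ℝ, |c (i+1) t - c i t| ≤ hstep := by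
    intro i t
    rw [hcdef]
    simp only
    rcases le_total t (-T + i * hstep) with hle | hle
    · have e1 : min t (-T + (i:ℝ) * hstep) = t := min_eq_left hle
      have e2 : min t (-T + ((i:ℕ)+1 : ℕ) * hstep) = t := min_eq_left (by push_cast; nlinarith)
      rw [e1, e2]; simpa using hh0
    · have e1 : min t (-T + (i:ℝ) * hstep) = -T + (i:ℝ)*hstep := min_eq_right hle
      rw [e1, abs_le]
      constructor
      · have : -T + (i:ℝ) * hstep ≤ min t (-T + ((i:ℕ)+1 : ℕ) * hstep) :=
          le_min hle (by push_cast; nlinarith)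
        linarith
      · have : min t (-T + ((i:ℕ)+1 : ℕ) * hstep) ≤ -T + ((i:ℝ)+1) * hstep := by
          apply le_trans (min_le_right _ _)
          push_cast; nlinarith
        nlinarith
  have hccont : ∀ i, Continuous fun t : ℝ => c i t := by
    intro i; rw [hcdef]; exact continuous_id.min continuous_const
  -- positive real part of consecutive ratios
  have hratio : ∀ i, ∀ s ∈ Set.Icc (0:ℝ) 1, ∀ t ∈ Set.Icc (-T) T,
      0 < ((f s (c (i+1) t)) / (f s (c i t))).re := by
    intro i s hs t ht
    have hm1 : ((s, c (i+1) t) : ℝ × ℝ) ∈ R := hmemR _ _ hs (hcmem _ t ht)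
    have hm2 : ((s, c i t) : ℝ × ℝ) ∈ R := hmemR _ _ hs (hcmem _ t ht)
    have hden : f s (c i t) ≠ 0 := hR0 _ hm2
    have hdist : dist ((s, c (i+1) t) : ℝ × ℝ) ((s, c i t) : ℝ × ℝ) < δ := by
      rw [Prod.dist_eq]
      apply max_lt
      · simpa using hδ
      · rw [Real.dist_eq]
        exact lt_of_le_of_lt (hcstep i t) hhδ
    have hfd : dist (f s (c (i+1) t)) (f s (c i t)) < ρ := by
      have := hδc ((s, c (i+1) t) : ℝ × ℝ) hm1 ((s, c i t) : ℝ × ℝ) hm2 hdist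
      simpa using this
    have hzρ : ρ ≤ ‖f s (c i t)‖ := hρle _ hm2
    have hq : ‖f s (c (i+1) t) / f s (c i t) - 1‖ < 1 := by
      rw [show f s (c (i+1) t) / f s (c i t) - 1
          = (f s (c (i+1) t) - f s (c i t)) / f s (c i t) by field_simp]
      rw [norm_div, div_lt_one (norm_pos_iff.mpr hden)]
      calc ‖f s (c (i+1) t) - f s (c i t)‖
          = dist (f s (c (i+1) t)) (f s (c i t)) := by rw [Complex.dist_eq]
        _ < ρ := hfd
        _ ≤ ‖f s (c i t)‖ := hzρ
    have habs := Complex.abs_re_le_norm (f s (c (i+1) t) / f s (c i t) - 1)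
    have h2 : |(f s (c (i+1) t) / f s (c i t)).re - 1| < 1 := by
      rw [show (f s (c (i+1) t) / f s (c i t)).re - 1
          = (f s (c (i+1) t) / f s (c i t) - 1).re by simp]
      exact lt_of_le_of_lt habs hq
    rw [abs_lt] at h2
    linarith [h2.1]
  -- base angle at t = -T
  obtain ⟨θ₀, hθ₀def⟩ : ∃ θ₀ : ℝ → ℝ, θ₀ = fun s => Real.pi + Complex.arg (-(f s (-T))) :=
    ⟨_, rfl⟩
  have hmT : (-T) ∈ Set.Icc (-T) T := ⟨le_refl _, by linarith⟩
  have hTmem : T ∈ Set.Icc (-T) T := ⟨by linarith, le_refl _⟩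
  have hbase : ∀ s ∈ Set.Icc (0:ℝ) 1,
      f s (-T) = (‖f s (-T)‖ : ℂ) * Complex.exp ((θ₀ s : ℂ) * Complex.I) := by
    intro s hs
    have hz : f s (-T) ≠ 0 := hne s hs (-T) hmT
    have h1' := Complex.norm_mul_exp_arg_mul_I (-(f s (-T)))
    rw [hθ₀def]
    simp only [Complex.ofReal_add, add_mul, Complex.exp_add, Complex.exp_pi_mul_I]
    rw [norm_neg] at h1'
    calc f s (-T) = -(-(f s (-T))) := by ring
      _ = -((‖f s (-T)‖ : ℂ) *
            Complex.exp ((Complex.arg (-(f s (-T))) : ℂ) * Complex.I)) := by rw [h1']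
      _ = (‖f s (-T)‖ : ℂ) *
            (-1 * Complex.exp ((Complex.arg (-(f s (-T))) : ℂ) * Complex.I)) := by ring
  -- the continuous argument
  obtain ⟨Θ, hΘdef⟩ : ∃ Θ : ℝ → ℝ → ℝ, Θ = fun s t => θ₀ s +
      ∑ i ∈ Finset.range n, Complex.arg (f s (c (i+1) t) / f s (c i t)) := ⟨_, rfl⟩
  have hE : ∀ s ∈ Set.Icc (0:ℝ) 1, ∀ t ∈ Set.Icc (-T) T,
      f s t = (‖f s t‖ : ℂ) * Complex.exp ((Θ s t : ℂ) * Complex.I) := by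
    intro s hs t ht
    have key : ∀ m : ℕ, m ≤ n → f s (c m t) =
        (‖f s (c m t)‖ : ℂ) *
          Complex.exp (((θ₀ s + ∑ i ∈ Finset.range m,
            Complex.arg (f s (c (i+1) t) / f s (c i t)) : ℝ) : ℂ) * Complex.I) := by
      intro m
      induction m with
      | zero =>
        intro _
        simpa [hc0 t ht] using hbase s hs
      | succ m ih =>
        intro hm
        have hprev := ih (by omega)
        have hdm : f s (c m t) ≠ 0 := hR0 _ (hmemR _ _ hs (hcmem m t ht))
        have hdm1 : f s (c (m+1) t) ≠ 0 := hR0 _ (hmemR _ _ hs (hcmem (m+1) t ht))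
        have hwz0 : f s (c (m+1) t) / f s (c m t) ≠ 0 := div_ne_zero hdm1 hdm
        have hzab : ((‖f s (c m t)‖ : ℝ) : ℂ) ≠ 0 :=
          Complex.ofReal_ne_zero.2 (norm_ne_zero_iff.mpr hdm)
        have hwab : ((‖f s (c (m+1) t)‖ : ℝ) : ℂ) ≠ 0 :=
          Complex.ofReal_ne_zero.2 (norm_ne_zero_iff.mpr hdm1)
        have hrab : ((‖f s (c (m+1) t) / f s (c m t)‖ : ℝ) : ℂ) ≠ 0 :=
          Complex.ofReal_ne_zero.2 (norm_ne_zero_iff.mpr hwz0)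
        have e1 : Complex.exp (((θ₀ s + ∑ i ∈ Finset.range m,
            Complex.arg (f s (c (i+1) t) / f s (c i t)) : ℝ) : ℂ) * Complex.I)
            = f s (c m t) / ((‖f s (c m t)‖ : ℝ) : ℂ) := by
          rw [eq_div_iff hzab, mul_comm]
          exact hprev.symm
        have e2 : Complex.exp ((Complex.arg (f s (c (m+1) t) / f s (c m t)) : ℂ) * Complex.I)
            = (f s (c (m+1) t) / f s (c m t)) /
              ((‖f s (c (m+1) t) / f s (c m t)‖ : ℝ) : ℂ) := by
          rw [eq_div_iff hrab, mul_comm]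
          exact Complex.norm_mul_exp_arg_mul_I _
        rw [Finset.sum_range_succ]
        rw [show ((θ₀ s + (∑ i ∈ Finset.range m,
              Complex.arg (f s (c (i+1) t) / f s (c i t)) +
              Complex.arg (f s (c (m+1) t) / f s (c m t))) : ℝ) : ℂ)
            = ((θ₀ s + ∑ i ∈ Finset.range m,
              Complex.arg (f s (c (i+1) t) / f s (c i t)) : ℝ) : ℂ)
              + ((Complex.arg (f s (c (m+1) t) / f s (c m t)) : ℝ) : ℂ) by push_cast; ring]
        rw [add_mul, Complex.exp_add, e1, e2]
        rw [norm_div, Complex.ofReal_div]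
        field_simp
    have hkey := key n (le_refl n)
    rw [hcn t ht] at hkey
    rw [hΘdef]
    exact hkey
  -- continuity of Θ
  have hΘcont : ∀ p ∈ R, ContinuousAt (fun q : ℝ × ℝ => Θ q.1 q.2) p := by
    intro p hp
    rw [hΘdef]
    simp only
    apply ContinuousAt.add
    · rw [hθ₀def]
      simp only
      apply ContinuousAt.add continuousAt_const
      have hre : 0 < (-(f p.1 (-T))).re := by
        have := hT2 p.1 (hmemR' p hp).1
        simpa using this
      have hslit : -(f p.1 (-T)) ∈ Complex.slitPlane := Complex.mem_slitPlane_iff.2 (Or.inl hre)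
      have hinner : ContinuousAt (fun q : ℝ × ℝ => -(f q.1 (-T))) p := by
        apply ContinuousAt.neg
        exact (hfc.comp (continuous_fst.prodMk continuous_const)).continuousAt
      have hcomp := ContinuousAt.comp (f := fun q : ℝ × ℝ => -(f q.1 (-T)))
        (Complex.continuousAt_arg hslit) hinner
      simpa [Function.comp_def] using hcomp
    · apply tendsto_finset_sum
      intro i _
      have hnum : ContinuousAt (fun q : ℝ × ℝ => f q.1 (c (i+1) q.2)) p :=
        (hfc.comp (continuous_fst.prodMk ((hccont (i+1)).comp continuous_snd))).continuousAt
      have hden : ContinuousAt (fun q : ℝ × ℝ => f q.1 (c i q.2)) p :=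
        (hfc.comp (continuous_fst.prodMk ((hccont i).comp continuous_snd))).continuousAt
      have hdenne : f p.1 (c i p.2) ≠ 0 :=
        hR0 _ (hmemR _ _ (hmemR' p hp).1 (hcmem i _ (hmemR' p hp).2))
      have hslit : f p.1 (c (i+1) p.2) / f p.1 (c i p.2) ∈ Complex.slitPlane :=
        Complex.mem_slitPlane_iff.2 (Or.inl (hratio i p.1 (hmemR' p hp).1 p.2 (hmemR' p hp).2))
      have hcomp := ContinuousAt.comp
        (f := fun q : ℝ × ℝ => f q.1 (c (i+1) q.2) / f q.1 (c i q.2))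
        (Complex.continuousAt_arg hslit) (hnum.div hden hdenne)
      exact hcomp
  -- real/imaginary parts via Θ
  have habs_pos : ∀ s ∈ Set.Icc (0:ℝ) 1, ∀ t ∈ Set.Icc (-T) T, 0 < ‖f s t‖ :=
    fun s hs t ht => norm_pos_iff.mpr (hne s hs t ht)
  have hreim : ∀ s ∈ Set.Icc (0:ℝ) 1, ∀ t ∈ Set.Icc (-T) T,
      (f s t).re = ‖f s t‖ * Real.cos (Θ s t) ∧
      (f s t).im = ‖f s t‖ * Real.sin (Θ s t) := by
    intro s hs t ht
    have hE' := hE s hs t ht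
    constructor
    · conv_lhs => rw [hE']
      rw [Complex.exp_mul_I]
      simp only [Complex.mul_re, Complex.add_re, Complex.mul_im, Complex.add_im,
        Complex.cos_ofReal_re, Complex.sin_ofReal_re, Complex.cos_ofReal_im,
        Complex.sin_ofReal_im, Complex.I_re, Complex.I_im, Complex.ofReal_re,
        Complex.ofReal_im]
      ring
    · conv_lhs => rw [hE']
      rw [Complex.exp_mul_I]
      simp only [Complex.mul_re, Complex.add_re, Complex.mul_im, Complex.add_im,
        Complex.cos_ofReal_re, Complex.sin_ofReal_re, Complex.cos_ofReal_im,
        Complex.sin_ofReal_im, Complex.I_re, Complex.I_im, Complex.ofReal_re,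
        Complex.ofReal_im]
      ring
  -- sign facts for cos at t = ±T
  have hcosT : ∀ s ∈ Set.Icc (0:ℝ) 1, 0 < Real.cos (Θ s T) := by
    intro s hs
    have h' := (hreim s hs T hTmem).1
    have hpos := hT1 s hs
    nlinarith [habs_pos s hs T hTmem]
  have hcosmT : ∀ s ∈ Set.Icc (0:ℝ) 1, Real.cos (Θ s (-T)) < 0 := by
    intro s hs
    have h' := (hreim s hs (-T) hmT).1
    have hneg := hT2 s hs
    nlinarith [habs_pos s hs (-T) hmT]
  -- W and its endpoint values
  obtain ⟨W, hWdef⟩ : ∃ W : ℝ → ℝ, W = fun s => Θ s T - Θ s (-T) := ⟨_, rfl⟩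
  have h0mem : (0:ℝ) ∈ Set.Icc (0:ℝ) 1 := ⟨le_refl _, zero_le_one⟩
  have h1mem : (1:ℝ) ∈ Set.Icc (0:ℝ) 1 := ⟨zero_le_one, le_refl _⟩
  have hWcont : ContinuousOn W (Set.Icc (0:ℝ) 1) := by
    rw [hWdef]
    apply ContinuousOn.sub
    · intro s hs
      have hins : Continuous (fun x : ℝ => ((x, T) : ℝ × ℝ)) :=
        continuous_id.prodMk continuous_const
      have h' := ContinuousAt.comp (f := fun x : ℝ => ((x, T) : ℝ × ℝ))
        (hΘcont (s, T) (hmemR _ _ hs hTmem)) (hins.continuousAt (x := s))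
      have h'' : ContinuousAt (fun x : ℝ => Θ x T) s := by
        simpa [Function.comp_def] using h'
      exact h''.continuousWithinAt
    · intro s hs
      have hins : Continuous (fun x : ℝ => ((x, -T) : ℝ × ℝ)) :=
        continuous_id.prodMk continuous_const
      have h' := ContinuousAt.comp (f := fun x : ℝ => ((x, -T) : ℝ × ℝ))
        (hΘcont (s, -T) (hmemR _ _ hs hmT)) (hins.continuousAt (x := s))
      have h'' : ContinuousAt (fun x : ℝ => Θ x (-T)) s := by
        simpa [Function.comp_def] using h'
      exact h''.continuousWithinAt
  have hΘ0cont : ContinuousOn (fun t => Θ 0 t) (Set.Icc (-T) T) := by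
    intro t ht
    have hins : Continuous (fun x : ℝ => (((0:ℝ), x) : ℝ × ℝ)) :=
      continuous_const.prodMk continuous_id
    have h' := ContinuousAt.comp (f := fun x : ℝ => (((0:ℝ), x) : ℝ × ℝ))
      (hΘcont (0, t) (hmemR _ _ h0mem ht)) (hins.continuousAt (x := t))
    have h'' : ContinuousAt (fun x : ℝ => Θ 0 x) t := by
      simpa [Function.comp_def] using h'
    exact h''.continuousWithinAt
  have hΘ1cont : ContinuousOn (fun t => -Θ 1 t) (Set.Icc (-T) T) := by
    intro t ht
    have hins : Continuous (fun x : ℝ => (((1:ℝ), x) : ℝ × ℝ)) :=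
      continuous_const.prodMk continuous_id
    have h' := ContinuousAt.comp (f := fun x : ℝ => (((1:ℝ), x) : ℝ × ℝ))
      (hΘcont (1, t) (hmemR _ _ h1mem ht)) (hins.continuousAt (x := t))
    have h'' : ContinuousAt (fun x : ℝ => -Θ 1 x) t := by
      have : ContinuousAt (fun x : ℝ => Θ 1 x) t := by simpa [Function.comp_def] using h'
      exact this.neg
    exact h''.continuousWithinAt
  -- pin at s = 0
  have hsin0 : ∀ t ∈ Set.Icc (-T) T, Real.sin (Θ 0 t) < 0 := by
    intro t ht
    have h' := (hreim 0 h0mem t ht).2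
    have him := h0 t ht
    nlinarith [habs_pos 0 h0mem t ht]
  have hW0 : 0 < W 0 := by
    have hp := pin hT hΘ0cont hsin0 (hcosT 0 h0mem) (hcosmT 0 h0mem)
    rw [hWdef]
    exact hp.1
  -- pin at s = 1
  have hsin1 : ∀ t ∈ Set.Icc (-T) T, Real.sin ((fun x => -Θ 1 x) t) < 0 := by
    intro t ht
    simp only [Real.sin_neg, neg_lt, neg_zero]
    have h' := (hreim 1 h1mem t ht).2
    have him := h1 t ht
    nlinarith [habs_pos 1 h1mem t ht]
  have hW1 : W 1 < 0 := by
    have hcos1T : 0 < Real.cos ((fun x => -Θ 1 x) T) := by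
      simp only [Real.cos_neg]
      exact hcosT 1 h1mem
    have hcos1mT : Real.cos ((fun x => -Θ 1 x) (-T)) < 0 := by
      simp only [Real.cos_neg]
      exact hcosmT 1 h1mem
    have hp := pin hT hΘ1cont hsin1 hcos1T hcos1mT
    rw [hWdef]
    simp only
    linarith [hp.1]
  -- W never vanishes
  have hWne : ∀ s ∈ Set.Icc (0:ℝ) 1, W s ≠ 0 := by
    intro s hs hcon
    have : Θ s T = Θ s (-T) := by
      rw [hWdef] at hcon
      simp only at hcon
      linarith [hcon]
    have h1' := hcosT s hs
    have h2' := hcosmT s hs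
    rw [this] at h1'
    linarith
  -- IVT
  have h01 : Set.uIcc (0:ℝ) 1 = Set.Icc (0:ℝ) 1 := Set.uIcc_of_le zero_le_one
  have hsub := intermediate_value_uIcc (by rw [h01]; exact hWcont)
  have h0mem' : (0:ℝ) ∈ Set.uIcc (W 0) (W 1) := by
    rw [Set.mem_uIcc]
    right
    exact ⟨hW1.le, hW0.le⟩
  obtain ⟨s', hs', hWs'⟩ := hsub h0mem'
  rw [h01] at hs'
  exact hWne s' hs' hWs'


lemma coe_rep (z : AddCircle (1:ℝ)) : ((rep z : ℝ) : AddCircle (1:ℝ)) = z := by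
  have h := (AddCircle.equivIco (1:ℝ) 0).symm_apply_apply z
  conv_rhs => rw [← h]
  rfl

lemma rep_eq_add_int (x : ℝ) : ∃ k : ℤ, rep ((x : AddCircle (1:ℝ))) = x + k := by
  have h := coe_rep ((x : AddCircle (1:ℝ)))
  rw [QuotientAddGroup.eq_iff_sub_mem] at h
  obtain ⟨k, hk⟩ := AddSubgroup.mem_zmultiples_iff.1 h
  refine ⟨k, ?_⟩
  have : (k : ℝ) • (1:ℝ) = (k : ℝ) := by simp
  rw [zsmul_eq_mul, mul_one] at hk
  linarith [hk]

/-- evaluation of a 1-periodic function at rep -/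
lemma per_rep {F : ℝ → ℝ} (hper : ∀ x (k : ℤ), F (x + k) = F x) (x : ℝ) :
    F (rep ((x : AddCircle (1:ℝ)))) = F x := by
  obtain ⟨k, hk⟩ := rep_eq_add_int x
  rw [hk, hper]

/-- semiconjugacy -/
lemma semiconj {G : ℝ → ℝ} (hper : ∀ x (k : ℤ), G (x + k) = G x) (Z : ℝ × ℝ) :
    projCyl (liftMap G Z) = inducedMap G (projCyl Z) := by
  unfold projCyl liftMap inducedMap
  have h1 : G (rep ((Z.1 : AddCircle (1:ℝ)))) = G Z.1 := per_rep hper Z.1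
  refine Prod.ext ?_ ?_
  · show ((Z.1 + Z.2 + G Z.1 : ℝ) : AddCircle (1:ℝ))
      = (Z.1 : AddCircle (1:ℝ)) + ((Z.2 + G (rep ((Z.1 : AddCircle (1:ℝ)))) : ℝ) : AddCircle (1:ℝ))
    rw [h1, ← AddCircle.coe_add]
    ring_nf
  · show Z.2 + G Z.1 = Z.2 + G (rep ((Z.1 : AddCircle (1:ℝ))))
    rw [h1]

lemma semiconj_iter {G : ℝ → ℝ} (hper : ∀ x (k : ℤ), G (x + k) = G x) (m : ℕ) (Z : ℝ × ℝ) :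
    projCyl ((liftMap G)^[m] Z) = (inducedMap G)^[m] (projCyl Z) := by
  induction m with
  | zero => rfl
  | succ m ih =>
    rw [Function.iterate_succ_apply', Function.iterate_succ_apply', semiconj hper, ih]

lemma inducedMap_injective (G : ℝ → ℝ) : Function.Injective (inducedMap G) := by
  intro z w h
  have h2 : z.2 + G (rep z.1) = w.2 + G (rep w.1) := congrArg Prod.snd h
  have h1 : z.1 + ((z.2 + G (rep z.1) : ℝ) : AddCircle (1:ℝ))
      = w.1 + ((w.2 + G (rep w.1) : ℝ) : AddCircle (1:ℝ)) := congrArg Prod.fst h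
  rw [h2] at h1
  have hz1 : z.1 = w.1 := by
    exact add_right_cancel h1
  have hz2 : z.2 = w.2 := by
    rw [hz1] at h2
    exact add_right_cancel h2
  exact Prod.ext hz1 hz2

lemma inducedMap_continuous {G : ℝ → ℝ} (hc : Continuous G)
    (hper : ∀ x (k : ℤ), G (x + k) = G x) : Continuous (inducedMap G) := by
  have hper1 : Function.Periodic G 1 := by
    intro x
    have := hper x 1
    simpa using this
  have hlift : Continuous (fun z : AddCircle (1:ℝ) => G (rep z)) := by
    have hq : Continuous (fun x : ℝ => ((x : AddCircle (1:ℝ)))) := continuous_quotient_mk'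
    have key : (fun z : AddCircle (1:ℝ) => G (rep z)) ∘ (fun x : ℝ => (x : AddCircle (1:ℝ)))
        = G := by
      funext x
      exact per_rep (fun y k => by
        have h := hper1.sub_int_mul_eq (x := y + k) k
        simpa using h.symm) x
    rw [show (fun z : AddCircle (1:ℝ) => G (rep z)) = AddCircle.liftIco 1 0 G from ?_]
    · exact AddCircle.liftIco_continuous (by
        simpa using (hper1 0).symm) hc.continuousOn
    · funext z
      unfold AddCircle.liftIco rep
      simp [Function.comp]
  unfold inducedMap
  apply Continuous.prodMk
  · apply Continuous.add continuous_fst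
    exact Continuous.comp continuous_quotient_mk'
      ((continuous_snd).add (hlift.comp continuous_fst))
  · exact (continuous_snd).add (hlift.comp continuous_fst)



/-- crossing lemma in real coordinates -/
lemma crossing {u v a b : ℝ → ℝ} (hu : Continuous u) (hv : Continuous v)
    (ha : Continuous a) (hb : Continuous b) {T : ℝ} (hT : 0 < T)
    (hT1 : ∀ s ∈ Set.Icc (0:ℝ) 1, 0 < u T - a s)
    (hT2 : ∀ s ∈ Set.Icc (0:ℝ) 1, u (-T) - a s < 0)
    (h0 : ∀ t ∈ Set.Icc (-T) T, v t - b 0 < 0)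
    (h1 : ∀ t ∈ Set.Icc (-T) T, 0 < v t - b 1)
    (hne : ∀ s ∈ Set.Icc (0:ℝ) 1, ∀ t ∈ Set.Icc (-T) T, (a s, b s) ≠ (u t, v t)) :
    False := by
  apply crossing_core (fC u v a b) (fC_cont u v a b hu hv ha hb) hT
  · intro s hs; rw [fC_re]; exact hT1 s hs
  · intro s hs; rw [fC_re]; exact hT2 s hs
  · intro t ht; rw [fC_im]; exact h0 t ht
  · intro t ht; rw [fC_im]; exact h1 t ht
  · intro s hs t ht hzero
    apply hne s hs t ht
    have h1' : u t - a s = 0 := by rw [← fC_re u v a b s t, hzero]; rfl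
    have h2' : v t - b s = 0 := by rw [← fC_im u v a b s t, hzero]; rfl
    exact Prod.ext (by linarith) (by linarith)

/-- the vertically climbing orbit -/
lemma climb {G : ℝ → ℝ} (hper : ∀ x (k : ℤ), G (x + k) = G x) {x₁ : ℝ} (hG1 : G x₁ = 1)
    (M0 : ℤ) : ∀ m : ℕ, ∃ j : ℤ,
      (liftMap G)^[m] (x₁, (M0 : ℝ)) = (x₁ + (j : ℝ), ((M0 + m : ℤ) : ℝ)) := by
  intro m
  induction m with
  | zero => exact ⟨0, by simp⟩
  | succ m ih =>
    obtain ⟨j, hj⟩ := ih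
    rw [Function.iterate_succ_apply', hj]
    refine ⟨j + M0 + m + 1, ?_⟩
    unfold liftMap
    have hGx : G (x₁ + (j:ℝ)) = 1 := by rw [hper x₁ j, hG1]
    simp only [hGx]
    refine Prod.ext ?_ ?_
    · show x₁ + (j:ℝ) + ((M0 + m : ℤ) : ℝ) + 1 = x₁ + ((j + M0 + m + 1 : ℤ) : ℝ)
      push_cast
      ring
    · show ((M0 + m : ℤ) : ℝ) + 1 = ((M0 + (m+1) : ℤ) : ℝ)
      push_cast
      ring

lemma iter_second_bound {G : ℝ → ℝ} {K : ℝ} (hK : ∀ x, |G x| ≤ K) (m : ℕ) (Z : ℝ × ℝ) :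
    |((liftMap G)^[m] Z).2 - Z.2| ≤ m * K := by
  induction m with
  | zero => simp
  | succ m ih =>
    rw [Function.iterate_succ_apply']
    have h1 : (liftMap G ((liftMap G)^[m] Z)).2
        = ((liftMap G)^[m] Z).2 + G ((liftMap G)^[m] Z).1 := rfl
    rw [h1]
    have h2 := hK ((liftMap G)^[m] Z).1
    have h3 : ((liftMap G)^[m] Z).2 + G ((liftMap G)^[m] Z).1 - Z.2
        = (((liftMap G)^[m] Z).2 - Z.2) + G ((liftMap G)^[m] Z).1 := by ring
    rw [h3]
    refine le_trans (abs_add_le _ _) ?_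
    push_cast
    linarith

lemma liftMap_continuous {G : ℝ → ℝ} (hGc : Continuous G) : Continuous (liftMap G) := by
  unfold liftMap
  exact ((continuous_fst.add continuous_snd).add (hGc.comp continuous_fst)).prodMk
    (continuous_snd.add (hGc.comp continuous_fst))

end AuxiliaryLemmas

/-- if x₀ is a maximum point of g̃ (not identically zero), then for every
λ ≥ 1/g̃(x₀) the map Ŝ_λ has no rotational invariant curve. -/
theorem stmt14 (g : ℝ → ℝ) (hcont : Continuous g) (hnz : ∃ x, g x ≠ 0)
    (hper : ∀ x, g (x + 1) = g x) (hint : ∫ x in (0:ℝ)..1, g x = 0)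
    (x₀ : ℝ) (hmax : ∀ x, g x ≤ g x₀) :
    ∀ lam : ℝ, 1 / g x₀ ≤ lam →
      ¬∃ Γ : Set Cyl, IsRIC (inducedMap (fun x => lam * g x)) Γ := by
  intro lam hlam hRIC
  obtain ⟨Γ, γ, hγc, hγi, ⟨γt, hγtc, hγtper, hγtlift⟩, hΓeq, hSΓ⟩ := hRIC
  -- basic periodicity facts for g
  have hgper : Function.Periodic g 1 := hper
  have hgint : ∀ (x : ℝ) (k : ℤ), g (x + k) = g x := fun x k => per_int hgper x k
  -- g x₀ > 0
  have hx0pos : 0 < g x₀ := by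
    by_contra hcon
    push_neg at hcon
    obtain ⟨x', hx'⟩ := hnz
    have hneg : ∀ x, 0 ≤ -g x := fun x => by linarith [hmax x]
    have hfx' : 0 < -g x' := by
      rcases lt_or_eq_of_le (by linarith [hmax x'] : g x' ≤ 0) with h | h
      · linarith
      · exact absurd h hx'
    have hfrac : Int.fract x' ∈ Set.Ico (0:ℝ) 1 :=
      ⟨Int.fract_nonneg x', Int.fract_lt_one x'⟩
    have hfr : -g (Int.fract x') = -g x' := by
      have h := hgper.sub_int_mul_eq (x := x') ⌊x'⌋
      rw [mul_one] at h
      have : Int.fract x' = x' - ⌊x'⌋ := rfl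
      rw [this, h]
    have hpos := integral_pos_of_pos_at (f := fun x => -g x) hcont.neg hneg hfrac
      (by show 0 < -g (Int.fract x'); rw [hfr]; exact hfx')
    rw [intervalIntegral.integral_neg, hint] at hpos
    simp at hpos
  -- there is a point with negative value
  have hxneg : ∃ x, g x < 0 := by
    by_contra hcon
    push_neg at hcon
    have hfrac : Int.fract x₀ ∈ Set.Ico (0:ℝ) 1 :=
      ⟨Int.fract_nonneg x₀, Int.fract_lt_one x₀⟩
    have hfr : g (Int.fract x₀) = g x₀ := by
      have h := hgper.sub_int_mul_eq (x := x₀) ⌊x₀⌋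
      rw [mul_one] at h
      have : Int.fract x₀ = x₀ - ⌊x₀⌋ := rfl
      rw [this, h]
    have hpos := integral_pos_of_pos_at (f := g) hcont hcon hfrac
      (by show 0 < g (Int.fract x₀); rw [hfr]; exact hx0pos)
    rw [hint] at hpos
    simp at hpos
  obtain ⟨xneg, hxneg'⟩ := hxneg
  -- λ is positive
  have hlampos : 0 < lam := lt_of_lt_of_le (by positivity) hlam
  -- the map G = λ g
  have hGc : Continuous (fun x => lam * g x) := continuous_const.mul hcont
  have hGper1 : Function.Periodic (fun x => lam * g x) 1 := fun x => by
    simp [hper x]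
  have hGint : ∀ (x : ℝ) (k : ℤ), lam * g (x + k) = lam * g x := fun x k => by
    rw [hgint x k]
  have hGx₀ : 1 ≤ lam * g x₀ := by
    rw [div_le_iff₀ hx0pos] at hlam
    linarith
  have hGneg : lam * g xneg < 0 := mul_neg_of_pos_of_neg hlampos hxneg'
  -- find x₁ with λ g x₁ = 1 by the intermediate value theorem
  obtain ⟨x₁, hx₁mem, hGx₁⟩ : ∃ x₁, x₁ ∈ Set.uIcc xneg x₀ ∧ lam * g x₁ = 1 := by
    have hsub := intermediate_value_uIcc (a := xneg) (b := x₀)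
      (f := fun x => lam * g x) hGc.continuousOn
    have h1mem : (1:ℝ) ∈ Set.uIcc (lam * g xneg) (lam * g x₀) := by
      rw [Set.mem_uIcc]
      left
      exact ⟨by linarith, hGx₀⟩
    obtain ⟨x₁, hx₁, hx₁'⟩ := hsub h1mem
    exact ⟨x₁, hx₁, hx₁'⟩
  -- curve data
  have huc : Continuous (fun t => (γt t).1) := hγtc.fst
  have hvc : Continuous (fun t => (γt t).2) := hγtc.snd
  have hvper : Function.Periodic (fun t => (γt t).2) 1 := by
    intro t
    show (γt (t + 1)).2 = (γt t).2
    rw [hγtper t]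
    simp
  have huper : Function.Periodic (fun t => (γt t).1 - t) 1 := by
    intro t
    show (γt (t + 1)).1 - (t + 1) = (γt t).1 - t
    rw [hγtper t]
    simp
  obtain ⟨B, hB0, hB⟩ := bounded_of_periodic hvc hvper
  obtain ⟨Cu, hCu0, hCu⟩ := bounded_of_periodic (huc.sub continuous_id) huper
  -- all points of Γ have second coordinate bounded by B
  have hΓbound : ∀ z ∈ Γ, |z.2| ≤ B := by
    intro z hz
    rw [hΓeq] at hz
    obtain ⟨ζ, rfl⟩ := hz
    obtain ⟨τ, _, rfl⟩ := AddCircle.eq_coe_Ico ζ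
    rw [hγtlift τ]
    exact hB τ
  -- pick N > B
  obtain ⟨N, hN⟩ := exists_nat_gt B
  have hNpos : 0 < (N:ℝ) := lt_of_le_of_lt hB0 hN
  -- bound for λ g
  obtain ⟨K, hK0, hK⟩ := bounded_of_periodic hGc hGper1
  -- the path
  have hPc : Continuous (fun s : ℝ =>
      (liftMap (fun x => lam * g x))^[2*N] (x₁, -(N:ℝ) - s * (2*N*K))) := by
    apply ((liftMap_continuous hGc).iterate (2*N)).comp
    exact continuous_const.prodMk (continuous_const.sub (continuous_id.mul continuous_const))
  have hAc : Continuous (fun s : ℝ =>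
      ((liftMap (fun x => lam * g x))^[2*N] (x₁, -(N:ℝ) - s * (2*N*K))).1) := hPc.fst
  have hBc : Continuous (fun s : ℝ =>
      ((liftMap (fun x => lam * g x))^[2*N] (x₁, -(N:ℝ) - s * (2*N*K))).2) := hPc.snd
  -- top endpoint
  have hb0 : ((liftMap (fun x => lam * g x))^[2*N] (x₁, -(N:ℝ) - 0 * (2*N*K))).2 = N := by
    have hstart : ((x₁, -(N:ℝ) - 0 * (2*N*K)) : ℝ × ℝ) = (x₁, (((-(N:ℤ)):ℤ) : ℝ)) := by
      refine Prod.ext rfl ?_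
      push_cast
      ring
    rw [hstart]
    obtain ⟨j, hj⟩ := climb (G := fun x => lam * g x) hGint hGx₁ (-(N:ℤ)) (2*N)
    rw [hj]
    push_cast
    ring
  -- bottom endpoint
  have hb1 : ((liftMap (fun x => lam * g x))^[2*N] (x₁, -(N:ℝ) - 1 * (2*N*K))).2 ≤ -(N:ℝ) := by
    have hbd := iter_second_bound hK (2*N) ((x₁, -(N:ℝ) - 1 * (2*N*K)) : ℝ × ℝ)
    have h2 : |((liftMap (fun x => lam * g x))^[2*N] (x₁, -(N:ℝ) - 1 * (2*N*K))).2
        - (-(N:ℝ) - 1 * (2*N*K))| ≤ (2*N : ℕ) * K := hbd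
    rw [abs_le] at h2
    have := h2.2
    push_cast at this ⊢
    linarith
  -- the path misses the curve
  have hmiss : ∀ s ∈ Set.Icc (0:ℝ) 1, ∀ t : ℝ,
      (((liftMap (fun x => lam * g x))^[2*N] (x₁, -(N:ℝ) - s * (2*N*K))).1,
       ((liftMap (fun x => lam * g x))^[2*N] (x₁, -(N:ℝ) - s * (2*N*K))).2)
      ≠ ((γt t).1, (γt t).2) := by
    intro s hs t heq
    have hPeq : (liftMap (fun x => lam * g x))^[2*N] (x₁, -(N:ℝ) - s * (2*N*K)) = γt t := by
      have h1 := congrArg Prod.fst heq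
      have h2 := congrArg Prod.snd heq
      exact Prod.ext h1 h2
    -- project to the cylinder
    have hproj : projCyl ((liftMap (fun x => lam * g x))^[2*N] (x₁, -(N:ℝ) - s * (2*N*K)))
        = γ ((t : AddCircle (1:ℝ))) := by
      rw [hPeq, hγtlift t]
    rw [semiconj_iter hGint] at hproj
    have hmem : (inducedMap (fun x => lam * g x))^[2*N]
        (projCyl ((x₁, -(N:ℝ) - s * (2*N*K)) : ℝ × ℝ)) ∈ Γ := by
      rw [hproj, hΓeq]
      exact Set.mem_range_self _
    -- iterated image of Γ is Γ
    have hiter : ∀ m : ℕ, (inducedMap (fun x => lam * g x))^[m] '' Γ = Γ := by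
      intro m
      induction m with
      | zero => simp
      | succ m ih =>
        rw [Function.iterate_succ', Set.image_comp, ih, hSΓ]
    have hmem' : projCyl ((x₁, -(N:ℝ) - s * (2*N*K)) : ℝ × ℝ) ∈ Γ := by
      have h3 : (inducedMap (fun x => lam * g x))^[2*N]
          (projCyl ((x₁, -(N:ℝ) - s * (2*N*K)) : ℝ × ℝ)) ∈
          (inducedMap (fun x => lam * g x))^[2*N] '' Γ := by
        rw [hiter (2*N)]
        exact hmem
      obtain ⟨w, hw, hweq⟩ := h3
      have := (inducedMap_injective (fun x => lam * g x)).iterate (2*N) hweq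
      rwa [← this]
    have hbnd := hΓbound _ hmem'
    have hy : (projCyl ((x₁, -(N:ℝ) - s * (2*N*K)) : ℝ × ℝ)).2 = -(N:ℝ) - s * (2*N*K) := rfl
    rw [hy, abs_le] at hbnd
    have h5 : (0:ℝ) ≤ s * (2*N*K) := by
      have := hs.1
      positivity
    have := hbnd.1
    linarith
  -- horizontal bound for the path
  obtain ⟨CA, hCA⟩ := isCompact_Icc.exists_bound_of_continuousOn
    (hAc.continuousOn (s := Set.Icc (0:ℝ) 1))
  have hCA0 : 0 ≤ CA := le_trans (norm_nonneg _) (hCA 0 ⟨le_refl _, zero_le_one⟩)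
  -- choose T
  have hTpos : 0 < Cu + CA + 1 := by linarith
  -- apply the crossing lemma
  apply crossing (u := fun t => (γt t).1) (v := fun t => (γt t).2)
    (a := fun s => ((liftMap (fun x => lam * g x))^[2*N] (x₁, -(N:ℝ) - s * (2*N*K))).1)
    (b := fun s => ((liftMap (fun x => lam * g x))^[2*N] (x₁, -(N:ℝ) - s * (2*N*K))).2)
    huc hvc hAc hBc hTpos
  · -- at t = T the curve is to the right of the path
    intro s hs
    have h1 := hCu (Cu + CA + 1)
    have h2 := hCA s hs
    rw [abs_le] at h1
    have h3 : |((liftMap (fun x => lam * g x))^[2*N] (x₁, -(N:ℝ) - s * (2*N*K))).1| ≤ CA := h2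
    rw [abs_le] at h3
    have e1 := h1.1
    have e2 := h3.2
    simp only [Pi.sub_apply, id_eq] at e1
    show 0 < (γt (Cu + CA + 1)).1 - _
    linarith
  · -- at t = -T the curve is to the left of the path
    intro s hs
    have h1 := hCu (-(Cu + CA + 1))
    have h2 := hCA s hs
    rw [abs_le] at h1
    have h3 : |((liftMap (fun x => lam * g x))^[2*N] (x₁, -(N:ℝ) - s * (2*N*K))).1| ≤ CA := h2
    rw [abs_le] at h3
    have e1 := h1.2
    have e2 := h3.1
    simp only [Pi.sub_apply, id_eq] at e1
    show (γt (-(Cu + CA + 1))).1 - _ < 0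
    linarith
  · -- path starts above the curve
    intro t ht
    rw [hb0]
    have := hB t
    rw [abs_le] at this
    linarith [this.2]
  · -- path ends below the curve
    intro t ht
    have := hB t
    rw [abs_le] at this
    have := this.1
    linarith [hb1]
  · -- no intersection
    intro s hs t ht hc
    exact hmiss s hs t (by
      rw [Prod.ext_iff] at hc ⊢
      exact ⟨hc.1.symm ▸ rfl, hc.2.symm ▸ rfl⟩)

end
end
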